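/- arXiv:1501.04341 — 4 statements merged into one kernel-verified Lean document; each statement's English description precedes it below -/
import Mathlib

section
/- Let K be a nonempty compact subset of ℂ whose complement ℂ \ K is connected. For every closed subset S ⊆ K, the following are equivalent: (i) for every f ∈ A(K) there exists s ∈ S with |f(s)| = sup_{z ∈ K} |f(z)| (i.e., S is a boundary for A(K) in the Shilov sense); (ii) ∂K ⊆ S. In particular, ∂K is the smallest closed boundary for A(K) in the Shilov sense, i.e., the Shilov boundary of A(K) equals ∂K. -/
open Set Metric in
/-- For a nonempty compact `K ⊆ ℂ` with connected complement, a closed subset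
`S ⊆ K` is a boundary for `A(K)` in the Shilov sense iff `∂K ⊆ S`; hence the
Shilov boundary of `A(K)` equals `∂K`. -/
theorem shilov_boundary_eq_frontier (K : Set ℂ) (hK : IsCompact K)
    (hKne : K.Nonempty) (hKc : IsConnected Kᶜ)
    (S : Set ℂ) (hS : IsClosed S) (hSK : S ⊆ K) :
    (∀ f : ℂ → ℂ, ContinuousOn f K → DifferentiableOn ℂ f (interior K) →
        ∃ s ∈ S, ‖f s‖ = sSup ((fun z => ‖f z‖) '' K))
      ↔ frontier K ⊆ S := by
  have hKcl : IsClosed K := hK.isClosed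
  have hfrK : frontier K = K \ interior K := by
    rw [frontier, hKcl.closure_eq]
  constructor
  · -- boundary property ⇒ frontier K ⊆ S
    intro H z₀ hz₀
    by_contra hz₀S
    have hz₀K : z₀ ∈ K := hKcl.closure_eq ▸ frontier_subset_closure hz₀
    -- find d > 0 with ball z₀ d disjoint from S
    obtain ⟨d, hd0, hdS⟩ : ∃ d > 0, ball z₀ d ⊆ Sᶜ := by
      rcases Metric.isOpen_iff.1 hS.isOpen_compl z₀ hz₀S with ⟨d, hd0, hd⟩
      exact ⟨d, hd0, hd⟩
    -- find w ∉ K with dist w z₀ < d/2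
    obtain ⟨w, hwb, hwK⟩ : ∃ w, w ∈ ball z₀ (d / 2) ∧ w ∈ Kᶜ := by
      have : z₀ ∈ closure Kᶜ := by
        rw [frontier_eq_closure_inter_closure] at hz₀; exact hz₀.2
      rcases _root_.mem_closure_iff.1 this (ball z₀ (d / 2)) isOpen_ball
          (mem_ball_self (by linarith)) with ⟨w, hw1, hw2⟩
      exact ⟨w, hw1, hw2⟩
    set f : ℂ → ℂ := fun z => (z - w)⁻¹ with hf
    have hne : ∀ z ∈ K, z - w ≠ 0 := by
      intro z hz h
      exact hwK (by rwa [sub_eq_zero.1 h] at hz)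
    have hcont : ContinuousOn f K :=
      ContinuousOn.inv₀ (by fun_prop) hne
    have hdiff : DifferentiableOn ℂ f (interior K) :=
      DifferentiableOn.inv (by fun_prop) fun z hz => hne z (interior_subset hz)
    obtain ⟨s, hsS, hs⟩ := H f hcont hdiff
    have hbdd : BddAbove ((fun z => ‖f z‖) '' K) :=
      (hK.image_of_continuousOn (continuous_norm.comp_continuousOn hcont)).bddAbove
    have hle : ‖f z₀‖ ≤ sSup ((fun z => ‖f z‖) '' K) :=
      le_csSup hbdd ⟨z₀, hz₀K, rfl⟩
    have h1 : ‖f z₀‖ > 2 / d := by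
      have hz₀w : ‖z₀ - w‖ < d / 2 := by
        rw [← dist_eq_norm, dist_comm]; exact hwb
      have hpos : 0 < ‖z₀ - w‖ := by
        simpa using (norm_pos_iff).2 (hne z₀ hz₀K)
      rw [hf]; simp only [norm_inv]
      rw [gt_iff_lt, div_lt_iff₀ hd0, inv_mul_eq_div, lt_div_iff₀ hpos]
      linarith
    have h2 : ‖f s‖ ≤ 2 / d := by
      have hsw : d / 2 ≤ ‖s - w‖ := by
        by_contra h
        push_neg at h
        have : s ∈ ball z₀ d := by
          rw [mem_ball, ← dist_eq_norm] at *
          calc dist s z₀ ≤ dist s w + dist w z₀ := dist_triangle _ _ _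
            _ < d / 2 + d / 2 := add_lt_add h hwb
            _ = d := by ring
        exact hdS this hsS
      rw [hf]; simp only [norm_inv]
      calc (‖s - w‖)⁻¹ ≤ (d / 2)⁻¹ :=
            inv_anti₀ (by linarith) hsw
        _ = 2 / d := by rw [inv_div]
    rw [hs] at h2
    linarith
  · -- frontier K ⊆ S ⇒ boundary property
    intro hsub f hf1 hf2
    obtain ⟨x, hxK, hmax⟩ := hK.exists_isMaxOn hKne
      (continuous_norm.comp_continuousOn hf1)
    have hsSup : sSup ((fun z => ‖f z‖) '' K) = ‖f x‖ :=
      IsGreatest.csSup_eq ⟨⟨x, hxK, rfl⟩, by rintro b ⟨z, hz, rfl⟩; exact hmax hz⟩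
    by_cases hxf : x ∈ frontier K
    · exact ⟨x, hsub hxf, hsSup.symm⟩
    have hxint : x ∈ interior K := by
      by_contra h
      exact hxf (hfrK ▸ ⟨hxK, h⟩)
    set U := connectedComponentIn (interior K) x with hU
    have hUo : IsOpen U := isOpen_interior.connectedComponentIn
    have hUp : IsPreconnected U := isPreconnected_connectedComponentIn
    have hxU : x ∈ U := mem_connectedComponentIn hxint
    have hUsub : U ⊆ interior K := connectedComponentIn_subset _ _
    have hUK : closure U ⊆ K := closure_minimal (hUsub.trans interior_subset) hKcl
    have hd : DiffContOnCl ℂ f U := ⟨hf2.mono hUsub, hf1.mono hUK⟩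
    have hm : IsMaxOn (norm ∘ f) U x := by
      intro z hz
      simpa using hmax (interior_subset (hUsub hz))
    have heq := Complex.norm_eqOn_closure_of_isPreconnected_of_isMaxOn hUp hUo hd hxU hm
    have hfr : (frontier U).Nonempty := by
      rw [nonempty_iff_ne_empty]
      intro h
      rcases isClopen_iff.1 (isClopen_iff_frontier_eq_empty.2 h) with h' | h'
      · rw [h'] at hxU; exact hxU
      · exact hK.ne_univ (univ_subset_iff.1 (h' ▸ hUK.trans' subset_closure))
    obtain ⟨y, hy⟩ := hfr
    have hycl : y ∈ closure U := frontier_subset_closure hy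
    have hyK : y ∈ K := hUK hycl
    have hyU : y ∉ U := by
      rw [hUo.frontier_eq] at hy; exact hy.2
    have hyint : y ∉ interior K := by
      intro hyi
      obtain ⟨p, hpV, hpU⟩ := _root_.mem_closure_iff.1 hycl
        (connectedComponentIn (interior K) y) isOpen_interior.connectedComponentIn
        (mem_connectedComponentIn hyi)
      have h1 := connectedComponentIn_eq hpV
      have h2 := connectedComponentIn_eq hpU
      rw [← hU] at h2
      have hEq : connectedComponentIn (interior K) y = U := by rw [h1, ← h2]
      exact hyU (hEq ▸ mem_connectedComponentIn hyi)
    have hyfr : y ∈ frontier K := hfrK ▸ ⟨hyK, hyint⟩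
    refine ⟨y, hsub hyfr, ?_⟩
    have := heq hycl
    simp only [Function.comp, Function.const] at this
    rw [hsSup, this]
end

section
/- Let K be a compact subset of ℂ whose complement ℂ \ K is connected, and let z ∈ K. The following are equivalent: (1) z ∈ ∂K; (2) z is a peak point for A(K); (3) z satisfies the Bishop 1/4–3/4 property: for every open set U ⊆ ℂ containing z there exists f ∈ A(K) such that sup_{w ∈ K} |f(w)| ≤ 1, f(z) is a real number greater than 3/4, and |f(w)| < 1/4 for all w ∈ K \ U. -/
open Metric Set Filter Topology

noncomputable section

private lemma prod_ratio {f : ℕ → ℂ} {N : ℕ} (h : ∀ i ≤ N, f i ≠ 0) :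
    ∏ i ∈ Finset.range N, f i / f (i + 1) = f 0 / f N := by
  induction N with
  | zero => simp [div_self (h 0 le_rfl)]
  | succ n ih =>
    have hn : f n ≠ 0 := h n (Nat.le_succ n)
    rw [Finset.prod_range_succ, ih (fun i hi => h i (hi.trans (Nat.le_succ n))),
      div_mul_div_comm, mul_comm (f 0) (f n), mul_div_mul_left _ _ hn]

set_option maxHeartbeats 2000000 in
private lemma exists_scale_fn {K : Set ℂ} (hK : IsCompact K) (hKc : IsConnected Kᶜ) {z : ℂ}
    (hzf : z ∈ frontier K) {s : ℝ} (hs : 0 < s) :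
    ∃ g : ℂ → ℂ, ContinuousOn g K ∧ DifferentiableOn ℂ g (interior K) ∧ g z = 1 ∧
      (∀ w ∈ K, ‖(g w)‖ ≤ 18) ∧
      (∀ w ∈ K, ‖(w - z)‖ < s / 4 → ‖(g w)‖ ≤ 1 + ‖(w - z)‖ / s) ∧
      (∀ w ∈ K, 1600 * s ≤ ‖(w - z)‖ → ‖(g w)‖ ≤ 1 / 19) := by
  classical
  have hKcl : IsClosed K := hK.isClosed
  have hzK : z ∈ K := by
    have := frontier_subset_closure (s := K) hzf
    rwa [hKcl.closure_eq] at this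
  have hKne : K.Nonempty := ⟨z, hzK⟩
  -- bound for K and the ball
  obtain ⟨R0, hR0⟩ := hK.isBounded.subset_ball 0
  set RW : ℝ := max R0 (‖z‖ + s) + 1 with hRWdef
  have hRWz : ‖z‖ + s + 1 ≤ RW := by
    have := le_max_right R0 (‖z‖ + s); simp only [hRWdef]; linarith
  have hRWpos : 0 < RW := by
    have : (0:ℝ) ≤ ‖z‖ := norm_nonneg z
    linarith
  have hWbound : ∀ w, w ∈ K ∪ closedBall z (s/4) → ‖w‖ ≤ RW := by
    intro w hw
    rcases hw with hw | hw
    · have : w ∈ ball 0 R0 := hR0 hw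
      rw [mem_ball_zero_iff] at this
      have h1 : ‖w‖ ≤ R0 := le_of_lt this
      have := le_max_left R0 (‖z‖ + s)
      simp only [hRWdef]; linarith
    · rw [mem_closedBall, Complex.dist_eq] at hw
      have h1 : ‖w‖ ≤ ‖(w - z)‖ + ‖z‖ := by
        have := norm_add_le (w - z) z; simpa using this
      linarith
  set q : ℂ := ((3*RW + 3*s + 3 : ℝ) : ℂ) with hqdef
  have hqabs : ‖q‖ = 3*RW + 3*s + 3 := by
    rw [hqdef, Complex.norm_real, Real.norm_eq_abs, abs_of_pos (by linarith)]
  have hqK : q ∈ Kᶜ := by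
    intro hq
    have := hWbound q (Or.inl hq)
    rw [hqabs] at this; linarith
  have hzRW : ‖z‖ ≤ RW := hWbound z (Or.inl hzK)
  have hqz : s < ‖(q - z)‖ := by
    have h1 : ‖q‖ ≤ ‖(q - z)‖ + ‖z‖ := by
      have := norm_add_le (q - z) z; simpa using this
    rw [hqabs] at h1; linarith
  -- a point of the complement near z
  have hzcl : z ∈ closure Kᶜ := by
    rw [frontier_eq_closure_inter_closure] at hzf; exact hzf.2
  obtain ⟨p₀, hp₀c, hp₀d⟩ : ∃ p₀ ∈ Kᶜ, dist z p₀ < s := by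
    rw [Metric.mem_closure_iff] at hzcl; exact hzcl s hs
  -- a path in the complement
  have hpc : IsPathConnected Kᶜ :=
    (hKcl.isOpen_compl.isConnected_iff_isPathConnected).mp hKc
  have hJ : JoinedIn Kᶜ p₀ q := hpc.joinedIn p₀ hp₀c q hqK
  set γ : Path p₀ q := hJ.somePath with hγdef
  have hγmem : ∀ t : unitInterval, γ t ∈ Kᶜ := hJ.somePath_mem
  have hext : ∀ t : ℝ, γ.extend t ∈ Kᶜ := by
    intro t
    have : γ.extend t = γ (Set.projIcc 0 1 zero_le_one t) := rfl
    rw [this]; exact hγmem _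
  have hextc : Continuous γ.extend := γ.continuous_extend
  -- last exit time
  set T : Set ℝ := Icc (0:ℝ) 1 ∩ γ.extend ⁻¹' closedBall z s with hTdef
  have hTcomp : IsCompact T := isCompact_Icc.inter_right (isClosed_closedBall.preimage hextc)
  have hT0 : (0:ℝ) ∈ T := by
    constructor
    · exact ⟨le_refl 0, zero_le_one⟩
    · simp only [mem_preimage, Path.extend_zero, mem_closedBall]
      rw [dist_comm]; exact hp₀d.le
  set t₀ : ℝ := sSup T with ht₀def
  have ht₀T : t₀ ∈ T := hTcomp.sSup_mem ⟨0, hT0⟩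
  have ht₀mem : t₀ ∈ Icc (0:ℝ) 1 := ht₀T.1
  set p : ℂ := γ.extend t₀ with hpdef
  have hpC : p ∈ Kᶜ := hext t₀
  have ht₀lt : t₀ < 1 := by
    rcases lt_or_eq_of_le ht₀mem.2 with h | h
    · exact h
    · exfalso
      have : γ.extend t₀ ∈ closedBall z s := ht₀T.2
      rw [h, Path.extend_one] at this
      rw [mem_closedBall, Complex.dist_eq] at this
      linarith
  have hple : dist p z ≤ s := by
    have := ht₀T.2; rwa [mem_preimage, mem_closedBall] at this
  have hps : dist p z = s := by
    rcases lt_or_eq_of_le hple with hlt | h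
    · exfalso
      have hc : ContinuousAt γ.extend t₀ := hextc.continuousAt
      rw [Metric.continuousAt_iff] at hc
      obtain ⟨δ, hδpos, hδ⟩ := hc (s - dist p z) (by linarith)
      set t₁ : ℝ := min 1 (t₀ + δ/2) with ht₁def
      have ht₁gt : t₀ < t₁ := by
        apply lt_min ht₀lt; linarith
      have ht₁d : dist t₁ t₀ < δ := by
        rw [Real.dist_eq, abs_of_pos (by linarith)]
        have : t₁ ≤ t₀ + δ/2 := min_le_right _ _
        linarith
      have ht₁T : t₁ ∈ T := by
        constructor
        · exact ⟨by linarith [ht₀mem.1], min_le_left _ _⟩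
        · rw [mem_preimage, mem_closedBall]
          have := hδ ht₁d
          have h2 : dist (γ.extend t₁) z ≤ dist (γ.extend t₁) (γ.extend t₀) + dist (γ.extend t₀) z :=
            dist_triangle _ _ _
          have h3 : dist (γ.extend t₁) (γ.extend t₀) < s - dist p z := this
          rw [← hpdef] at h2 h3
          linarith
      have : t₁ ≤ t₀ := le_csSup hTcomp.bddAbove ht₁T
      linarith
    · exact h
  have hpzabs : ‖(p - z)‖ = s := by rw [← Complex.dist_eq]; exact hps
  have hzp : ‖(z - p)‖ = s := by
    rw [← hpzabs, ← norm_neg]; ring_nf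
  have hzpne : (z : ℂ) - p ≠ 0 := by
    intro h; rw [h] at hzp; simp at hzp; linarith
  have htail : ∀ t : ℝ, t₀ ≤ t → t ≤ 1 → s ≤ ‖(γ.extend t - z)‖ := by
    intro t h1 h2
    by_contra hcon
    push_neg at hcon
    have htT : t ∈ T := by
      refine ⟨⟨le_trans ht₀mem.1 h1, h2⟩, ?_⟩
      rw [mem_preimage, mem_closedBall, Complex.dist_eq]
      exact hcon.le
    have : t ≤ t₀ := le_csSup hTcomp.bddAbove htT
    have : t = t₀ := le_antisymm this h1
    rw [this] at hcon
    rw [← hpdef] at hcon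
    rw [← Complex.dist_eq] at hcon
    linarith
  -- tail image and its distance to K
  set A : Set ℂ := γ.extend '' Icc t₀ 1 with hAdef
  have hAcomp : IsCompact A := isCompact_Icc.image hextc
  have hAne : A.Nonempty := ⟨p, ⟨t₀, ⟨le_refl _, ht₀mem.2⟩, rfl⟩⟩
  obtain ⟨x₀, hx₀A, hx₀min⟩ :=
    hAcomp.exists_isMinOn hAne ((continuous_infDist_pt K).continuousOn)
  set ε₀ : ℝ := infDist x₀ K with hε₀def
  have hx₀K : x₀ ∈ Kᶜ := by
    obtain ⟨t, _, rfl⟩ := hx₀A; exact hext t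
  have hε₀pos : 0 < ε₀ := (hKcl.notMem_iff_infDist_pos hKne).1 hx₀K
  have hAdist : ∀ x ∈ A, ∀ w ∈ K, ε₀ ≤ dist x w := by
    intro x hx w hw
    have h1 : infDist x₀ K ≤ infDist x K := hx₀min hx
    exact le_trans h1 (infDist_le_dist_of_mem hw)
  set ε₁ : ℝ := min ε₀ s / 2 with hε₁def
  have hε₁pos : 0 < ε₁ := by
    have := lt_min hε₀pos hs; simp only [hε₁def]; linarith
  have hε₁ε₀ : ε₁ ≤ ε₀ / 2 := by
    simp only [hε₁def]; have := min_le_left ε₀ s; linarith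
  have hε₁s : ε₁ ≤ s / 2 := by
    simp only [hε₁def]; have := min_le_right ε₀ s; linarith
  -- uniform continuity on the tail
  have huc := (isCompact_Icc (a := t₀) (b := 1)).uniformContinuousOn_of_continuous
    hextc.continuousOn
  rw [Metric.uniformContinuousOn_iff] at huc
  obtain ⟨δu, hδupos, hδu⟩ := huc ε₁ hε₁pos
  obtain ⟨N₀, hN₀⟩ := exists_nat_gt ((1 - t₀) / δu)
  set N : ℕ := N₀ + 1 with hNdef
  have hNpos : 0 < (N:ℝ) := by positivity
  have hstep : (1 - t₀)/(N:ℝ) < δu := by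
    have h1 : (1 - t₀)/δu < N := by
      have : (N₀ : ℝ) ≤ N := by exact_mod_cast Nat.le_succ N₀
      linarith
    rw [div_lt_iff₀ hNpos]
    rw [div_lt_iff₀ hδupos] at h1
    linarith [mul_comm δu (N:ℝ)]
  -- the chain of points
  set τ : ℕ → ℝ := fun i => t₀ + (1 - t₀) * (min i N) / N with hτdef
  set P : ℕ → ℂ := fun i => γ.extend (τ i) with hPdef
  have hτmem : ∀ i, τ i ∈ Icc t₀ 1 := by
    intro i
    have h1 : (0:ℝ) ≤ (min i N : ℕ) := by positivity
    have h2 : ((min i N : ℕ) : ℝ) ≤ N := by exact_mod_cast Nat.cast_le.2 (min_le_right i N)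
    constructor
    · simp only [hτdef]
      have : 0 ≤ (1 - t₀) * (min i N) / N := by
        apply div_nonneg _ hNpos.le
        apply mul_nonneg (by linarith [ht₀lt]) h1
      linarith
    · simp only [hτdef]
      have h3 : (1 - t₀) * ↑(i ⊓ N) / ↑N ≤ (1 - t₀) := by
        rw [div_le_iff₀ hNpos]
        have := mul_le_mul_of_nonneg_left h2 (by linarith [ht₀lt] : (0:ℝ) ≤ 1 - t₀)
        linarith
      linarith
  have hτ0 : τ 0 = t₀ := by simp [hτdef]
  have hτN : τ N = 1 := by
    simp only [hτdef, min_self]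
    field_simp
    ring
  have hP0 : P 0 = p := by simp only [hPdef, hτ0, hpdef]
  have hPN : P N = q := by simp only [hPdef, hτN, Path.extend_one]
  have hPz : ∀ i, s ≤ ‖(P i - z)‖ := fun i => htail _ (hτmem i).1 (hτmem i).2
  have hPA : ∀ i, P i ∈ A := fun i => ⟨τ i, hτmem i, rfl⟩
  have hPK : ∀ i, ∀ w ∈ K, ε₀ ≤ ‖(w - P i)‖ := by
    intro i w hw
    have := hAdist (P i) (hPA i) w hw
    rwa [dist_comm, Complex.dist_eq] at this
  have hdstep : ∀ i, i < N → ‖(P i - P (i+1))‖ < ε₁ := by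
    intro i hi
    have h1 : τ (i+1) - τ i = (1 - t₀)/N := by
      simp only [hτdef]
      rw [min_eq_left (by exact_mod_cast hi.le : (i:ℕ) ≤ N),
        min_eq_left (by exact_mod_cast hi : (i+1:ℕ) ≤ N)]
      push_cast
      field_simp
      ring
    have h2 : dist (τ i) (τ (i+1)) < δu := by
      rw [Real.dist_eq, abs_sub_comm, h1,
        abs_of_nonneg (div_nonneg (by linarith [ht₀lt]) hNpos.le)]
      exact hstep
    have := hδu (τ i) (hτmem i) (τ (i+1)) (hτmem (i+1)) h2
    simpa only [hPdef, Complex.dist_eq] using this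
  -- the open set U
  set U : Set ℂ := ({w | ‖w‖ < ‖q‖ / 2} ∩
      {w | ε₁/2 < ‖(w - P 0)‖}) ∩
      ⋂ i ∈ Finset.range N, {w | ‖(P i - P (i+1))‖ < ‖(w - P (i+1))‖}
    with hUdef
  have hUopen : IsOpen U := by
    apply IsOpen.inter
    · apply IsOpen.inter
      · exact isOpen_lt continuous_norm continuous_const
      · exact isOpen_lt continuous_const
          (continuous_norm.comp (continuous_id.sub continuous_const))
    · apply isOpen_biInter_finset
      intro i _
      exact isOpen_lt continuous_const
        (continuous_norm.comp (continuous_id.sub continuous_const))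
  have hUprop : ∀ w ∈ U, ‖w‖ < ‖q‖ / 2 ∧
      ε₁/2 < ‖(w - P 0)‖ ∧
      ∀ i < N, ‖(P i - P (i+1))‖ < ‖(w - P (i+1))‖ := by
    intro w hw
    obtain ⟨⟨h1, h2⟩, h3⟩ := hw
    refine ⟨h1, h2, fun i hi => ?_⟩
    have := Set.mem_iInter₂.1 h3 i (Finset.mem_range.2 hi)
    exact this
  have hWU : K ∪ closedBall z (s/4) ⊆ U := by
    intro w hw
    have hwb := hWbound w hw
    have hwP0 : ε₁/2 < ‖(w - P 0)‖ := by
      rcases hw with hw | hw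
      · have := hPK 0 w hw
        linarith
      · rw [mem_closedBall, Complex.dist_eq] at hw
        have h1 : s ≤ ‖(P 0 - z)‖ := hPz 0
        have h2 : ‖(P 0 - z)‖ ≤ ‖(w - P 0)‖ + ‖(w - z)‖ := by
          have := norm_sub_le_norm_sub_add_norm_sub (P 0) w z
          have heq : ‖(P 0 - w)‖ = ‖(w - P 0)‖ := by
            rw [← norm_neg]; ring_nf
          linarith [this, heq.le]
        linarith
    refine ⟨⟨by simp only [Set.mem_setOf_eq, hqabs]; linarith, hwP0⟩, ?_⟩
    rw [Set.mem_iInter₂]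
    intro i hi'
    have hi : i < N := Finset.mem_range.1 hi'
    have hd := hdstep i hi
    rcases hw with hw | hw
    · have := hPK (i+1) w hw
      simp only [Set.mem_setOf_eq]
      linarith
    · rw [mem_closedBall, Complex.dist_eq] at hw
      have h1 : s ≤ ‖(P (i+1) - z)‖ := hPz (i+1)
      have h2 : ‖(P (i+1) - z)‖ ≤ ‖(w - P (i+1))‖ + ‖(w - z)‖ := by
        have := norm_sub_le_norm_sub_add_norm_sub (P (i+1)) w z
        have heq : ‖(P (i+1) - w)‖ = ‖(w - P (i+1))‖ := by
          rw [← norm_neg]; ring_nf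
        linarith [this, heq.le]
      simp only [Set.mem_setOf_eq]
      linarith
  have hKU : K ⊆ U := fun w hw => hWU (Or.inl hw)
  have hzU : z ∈ U := hKU hzK
  have hBU : closedBall z (s/4) ⊆ U := fun w hw => hWU (Or.inr hw)
  have hq0 : q ≠ 0 := by
    intro h
    rw [h] at hqabs
    simp at hqabs
    linarith
  have hne : ∀ w ∈ U, ∀ i ≤ N, w - P i ≠ 0 := by
    intro w hw i hi
    obtain ⟨h1, h2, h3⟩ := hUprop w hw
    match i with
    | 0 =>
      intro h0
      rw [h0] at h2
      simp at h2
      linarith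
    | (j+1) =>
      intro h0
      have := h3 j (by omega)
      rw [h0] at this
      simp at this
      exact absurd this (norm_nonneg _).not_gt
  -- the logarithm
  set L : ℂ → ℂ := fun w => Complex.log (1 - w/q) + Complex.log (-q) +
      ∑ i ∈ Finset.range N, Complex.log ((w - P i)/(w - P (i+1))) with hLdef
  have hwqsmall : ∀ w ∈ U, ‖(w/q)‖ < 1/2 := by
    intro w hw
    obtain ⟨h1, _, _⟩ := hUprop w hw
    rw [norm_div]
    rw [div_lt_iff₀ (by rw [hqabs]; linarith : 0 < ‖q‖)]
    linarith
  have hwqre : ∀ w ∈ U, 1/2 < (1 - w/q).re := by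
    intro w hw
    have h1 := hwqsmall w hw
    have h2 : (w/q).re ≤ ‖(w/q)‖ := Complex.re_le_norm _
    simp only [Complex.sub_re, Complex.one_re]
    linarith
  have hwqne : ∀ w ∈ U, 1 - w/q ≠ 0 := by
    intro w hw
    intro h
    have := hwqre w hw
    rw [h] at this
    simp at this
    linarith
  have hratio : ∀ w ∈ U, ∀ i < N,
      ‖((w - P i)/(w - P (i+1)) - 1)‖ < 1 := by
    intro w hw i hi
    obtain ⟨_, _, h3⟩ := hUprop w hw
    have hden := hne w hw (i+1) hi
    have heq : (w - P i)/(w - P (i+1)) - 1 = (P (i+1) - P i)/(w - P (i+1)) := by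
      rw [div_sub_one hden]
      congr 1
      ring
    rw [heq, norm_div]
    rw [div_lt_one (by
      have := h3 i hi
      have h0 := norm_nonneg (P i - P (i+1))
      linarith)]
    have heq2 : ‖(P (i+1) - P i)‖ = ‖(P i - P (i+1))‖ := by
      rw [← norm_neg]; ring_nf
    rw [heq2]
    exact h3 i hi
  have hratiore : ∀ w ∈ U, ∀ i < N, 0 < ((w - P i)/(w - P (i+1))).re := by
    intro w hw i hi
    have h1 := hratio w hw i hi
    have h2 : (((w - P i)/(w - P (i+1))) - 1).re ≤ ‖((w - P i)/(w - P (i+1)) - 1)‖ :=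
      Complex.re_le_norm _
    have h3 : ((w - P i)/(w - P (i+1)) - 1).re ≥ -‖((w - P i)/(w - P (i+1)) - 1)‖ := by
      have := Complex.abs_re_le_norm ((w - P i)/(w - P (i+1)) - 1)
      have := abs_le.1 this
      linarith [this.1]
    simp only [Complex.sub_re, Complex.one_re] at h3
    linarith
  have hratione : ∀ w ∈ U, ∀ i < N, (w - P i)/(w - P (i+1)) ≠ 0 := by
    intro w hw i hi
    exact div_ne_zero (hne w hw i hi.le) (hne w hw (i+1) hi)
  have hexp : ∀ w ∈ U, Complex.exp (L w) = w - p := by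
    intro w hw
    have h0 := hne w hw
    have hprod : ∏ i ∈ Finset.range N, ((w - P i)/(w - P (i+1))) = (w - P 0)/(w - P N) :=
      prod_ratio (f := fun i => w - P i) h0
    simp only [hLdef]
    rw [Complex.exp_add, Complex.exp_add, Complex.exp_sum]
    have e1 : Complex.exp (Complex.log (1 - w/q)) = 1 - w/q := Complex.exp_log (hwqne w hw)
    have e2 : Complex.exp (Complex.log (-q)) = -q := Complex.exp_log (neg_ne_zero.2 hq0)
    have e3 : ∀ i ∈ Finset.range N,
        Complex.exp (Complex.log ((w - P i)/(w - P (i+1)))) = (w - P i)/(w - P (i+1)) := by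
      intro i hi
      exact Complex.exp_log (hratione w hw i (Finset.mem_range.1 hi))
    rw [e1, e2, Finset.prod_congr rfl e3, hprod, hPN, ← hP0]
    have hwq : w - q ≠ 0 := by rw [← hPN]; exact h0 N le_rfl
    field_simp
    ring
  have hLdiff : DifferentiableOn ℂ L U := by
    intro w hw
    apply DifferentiableAt.differentiableWithinAt
    simp only [hLdef]
    apply DifferentiableAt.add
    apply DifferentiableAt.add
    · apply DifferentiableAt.clog
      · exact (differentiableAt_const _).sub (differentiableAt_id.div_const q)
      · rw [Complex.mem_slitPlane_iff]
        left
        linarith [hwqre w hw]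
    · exact differentiableAt_const _
    · apply DifferentiableAt.fun_sum
      intro i hi
      have hiN := Finset.mem_range.1 hi
      apply DifferentiableAt.clog
      · exact ((differentiableAt_id.sub (differentiableAt_const _)).div
          (differentiableAt_id.sub (differentiableAt_const _)) (hne w hw (i+1) hiN))
      · rw [Complex.mem_slitPlane_iff]
        left
        exact hratiore w hw i hiN
  -- the square root
  set E : ℂ → ℂ := fun w => Complex.exp (L w / 2) with hEdef
  have hEdiff : DifferentiableOn ℂ E U := (hLdiff.div_const 2).cexp
  have hE0 : ∀ w, E w ≠ 0 := fun w => Complex.exp_ne_zero _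
  have hE2 : ∀ w ∈ U, E w * E w = w - p := by
    intro w hw
    simp only [hEdef]
    rw [← Complex.exp_add]
    have heq : L w / 2 + L w / 2 = L w := by ring
    rw [heq]
    exact hexp w hw
  set a : ℝ := Real.sqrt s with hadef
  have ha : 0 < a := Real.sqrt_pos.2 hs
  have haa : a * a = s := Real.mul_self_sqrt hs.le
  set aC : ℂ := (a : ℂ) with haCdef
  have haC0 : aC ≠ 0 := by
    simp only [haCdef]
    exact_mod_cast ha.ne'
  have haCabs : ‖aC‖ = a := by
    simp only [haCdef, Complex.norm_real, Real.norm_eq_abs]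
    exact abs_of_pos ha
  have haCsq : aC * aC = ((s:ℝ) : ℂ) := by
    simp only [haCdef]
    push_cast [← haa]
    ring
  set h : ℂ → ℂ := fun w => (aC / E z) * E w with hhdef
  have hhdiff : DifferentiableOn ℂ h U := hEdiff.const_mul _
  have hhz : h z = aC := by
    simp only [hhdef]
    exact div_mul_cancel₀ aC (hE0 z)
  have hsq' : ∀ w ∈ U, h w * h w * (z - p) = ((s:ℝ):ℂ) * (w - p) := by
    intro w hw
    have hEw := hE2 w hw
    have hEz := hE2 z hzU
    have key : h w * h w * (E z * E z) = (aC * aC) * (E w * E w) := by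
      simp only [hhdef]
      have := hE0 z
      field_simp
    rw [← hEz, ← hEw, ← haCsq]
    exact key
  have hfact : ∀ w ∈ U,
      ‖(h w - aC)‖ * ‖(h w + aC)‖ = ‖(w - z)‖ := by
    intro w hw
    have key2 : (h w - aC) * (h w + aC) * (z - p) = ((s:ℝ):ℂ) * (w - z) := by
      linear_combination hsq' w hw - (z - p) * haCsq
    have habs := congrArg (fun x : ℂ => ‖x‖) key2
    simp only [norm_mul, hzp, Complex.norm_real, Real.norm_eq_abs, abs_of_pos hs] at habs
    refine mul_right_cancel₀ hs.ne' ?_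
    rw [habs]; ring
  have habs2 : ∀ w ∈ U, ‖(h w)‖ * ‖(h w)‖ = ‖(w - p)‖ := by
    intro w hw
    have habs := congrArg (fun x : ℂ => ‖x‖) (hsq' w hw)
    simp only [norm_mul, hzp, Complex.norm_real, Real.norm_eq_abs, abs_of_pos hs] at habs
    refine mul_right_cancel₀ hs.ne' ?_
    rw [habs]; ring
  -- the ball lemma
  have hdich : ∀ v ∈ ball z (s/4),
      ‖(h v - aC)‖ ≤ a/7 ∨ 13*a/7 ≤ ‖(h v - aC)‖ := by
    intro v hv
    have hvU : v ∈ U := hBU (ball_subset_closedBall hv)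
    set x := ‖(h v - aC)‖ with hxdef
    set y := ‖(h v + aC)‖ with hydef
    have hxy : x * y = ‖(v - z)‖ := hfact v hvU
    have hvz : ‖(v - z)‖ < s/4 := by
      rw [mem_ball, Complex.dist_eq] at hv
      exact hv
    have hxnn : 0 ≤ x := norm_nonneg _
    have hynn : 0 ≤ y := norm_nonneg _
    have hsum : 2*a ≤ x + y := by
      have heq : (2:ℂ)*aC = (h v + aC) - (h v - aC) := by ring
      have h1 : ‖((2:ℂ)*aC)‖ = 2*a := by
        rw [norm_mul, haCabs]
        simp
      have h2 : ‖((h v + aC) - (h v - aC))‖ ≤ y + x := by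
        have := norm_sub_le (h v + aC) (h v - aC)
        exact this
      rw [heq] at h1
      linarith
    rcases le_total x y with hc | hc
    · left
      have hya : a ≤ y := by linarith
      have hx4 : x ≤ a/4 := by
        nlinarith [haa]
      have hy74 : 7*a/4 ≤ y := by linarith
      nlinarith [haa]
    · right
      have hxa : a ≤ x := by linarith
      have hy4 : y ≤ a/4 := by nlinarith [haa]
      have hx74 : 7*a/4 ≤ x := by linarith
      have hy7 : y ≤ a/7 := by nlinarith [haa]
      linarith
  have hball : ∀ w ∈ ball z (s/4), ‖(h w - aC)‖ ≤ a/6 := by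
    intro w hwB
    rcases hdich w hwB with hgood | hbad
    · linarith
    · exfalso
      have hcont : ContinuousOn (fun v => ‖(h v - aC)‖) (ball z (s/4)) := by
        apply continuous_norm.comp_continuousOn
        exact ((hhdiff.continuousOn.mono
          (ball_subset_closedBall.trans hBU)).sub continuousOn_const)
      have hzball : z ∈ ball z (s/4) := mem_ball_self (by linarith)
      have hIVT := (convex_ball z (s/4)).isPreconnected.intermediate_value
        hzball hwB hcont
      have hzero : ‖(h z - aC)‖ = 0 := by rw [hhz]; simp
      have hmem : a/2 ∈ Icc (‖(h z - aC)‖) (‖(h w - aC)‖) := by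
        rw [hzero]
        constructor
        · linarith
        · linarith
      obtain ⟨v, hvball, hveq⟩ := hIVT hmem
      have hveq' : ‖(h v - aC)‖ = a/2 := hveq
      rcases hdich v hvball with h1 | h1 <;> linarith [hveq'.le, hveq'.ge]
  -- the hole lemma
  have hhole : ∀ w ∈ K, a/9 ≤ ‖(h w + aC)‖ := by
    intro w hw
    by_contra hcon
    push_neg at hcon
    have hwU := hKU hw
    have hx : ‖(h w - aC)‖ ≤ ‖(h w + aC)‖ + 2*a := by
      have heq : h w - aC = (h w + aC) - 2*aC := by ring
      rw [heq]
      have := norm_sub_le (h w + aC) (2*aC)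
      have h2 : ‖((2:ℂ)*aC)‖ = 2*a := by rw [norm_mul, haCabs]; simp
      linarith
    have hwz : ‖(w - z)‖ < s/4 := by
      rw [← hfact w hwU]
      have hynn : (0:ℝ) ≤ ‖(h w + aC)‖ := norm_nonneg _
      nlinarith [haa, norm_nonneg (h w - aC)]
    have hwball : w ∈ ball z (s/4) := by
      rw [mem_ball, Complex.dist_eq]
      exact hwz
    have h4 := hball w hwball
    have h5 : 2*a ≤ ‖(h w - aC)‖ + ‖(h w + aC)‖ := by
      have heq : (2:ℂ)*aC = (h w + aC) - (h w - aC) := by ring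
      have h1 : ‖((2:ℂ)*aC)‖ = 2*a := by rw [norm_mul, haCabs]; simp
      have h2 := norm_sub_le (h w + aC) (h w - aC)
      rw [heq] at h1
      linarith
    linarith
  -- the function g
  set g : ℂ → ℂ := fun w => (2*aC) / (aC + h w) with hgdef
  have hden : ∀ w ∈ K, aC + h w ≠ 0 := by
    intro w hw hzero
    have := hhole w hw
    rw [add_comm] at hzero
    rw [hzero] at this
    simp at this
    linarith
  have hdenabs : ∀ w, ‖(aC + h w)‖ = ‖(h w + aC)‖ := by
    intro w; rw [add_comm]
  refine ⟨g, ?_, ?_, ?_, ?_, ?_, ?_⟩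
  · -- continuity on K
    apply ContinuousOn.div continuousOn_const
    · exact continuousOn_const.add (hhdiff.continuousOn.mono hKU)
    · exact hden
  · -- differentiability on interior K
    apply DifferentiableOn.div (differentiableOn_const _)
    · exact (differentiableOn_const _).add (hhdiff.mono (interior_subset.trans hKU))
    · exact fun w hw => hden w (interior_subset hw)
  · -- value at z
    simp only [hgdef, hhz]
    rw [show aC + aC = 2*aC by ring]
    exact div_self (by
      intro hcon
      rw [mul_eq_zero] at hcon
      rcases hcon with hcon | hcon
      · norm_num at hcon
      · exact haC0 hcon)
  · -- global bound 18
    intro w hw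
    have hd := hhole w hw
    simp only [hgdef]
    rw [norm_div, norm_mul, haCabs, hdenabs]
    rw [div_le_iff₀ (by linarith)]
    have : ‖(2:ℂ)‖ = 2 := by norm_num
    rw [this]
    nlinarith
  · -- bound near z
    intro w hw hnear
    have hwball : w ∈ ball z (s/4) := by rw [mem_ball, Complex.dist_eq]; exact hnear
    have hwU := hKU hw
    have hx := hball w hwball
    have hy : 11*a/6 ≤ ‖(h w + aC)‖ := by
      have h5 : 2*a ≤ ‖(h w - aC)‖ + ‖(h w + aC)‖ := by
        have heq : (2:ℂ)*aC = (h w + aC) - (h w - aC) := by ring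
        have h1 : ‖((2:ℂ)*aC)‖ = 2*a := by rw [norm_mul, haCabs]; simp
        have h2 := norm_sub_le (h w + aC) (h w - aC)
        rw [heq] at h1
        linarith
      linarith
    have hgm1 : g w - 1 = (aC - h w) / (aC + h w) := by
      simp only [hgdef]
      rw [div_sub_one (hden w hw)]
      congr 1
      ring
    have hgm1abs : ‖(g w - 1)‖ =
        ‖(h w - aC)‖ / ‖(h w + aC)‖ := by
      rw [hgm1, norm_div, hdenabs]
      congr 1
      rw [← norm_neg]
      congr 1
      ring
    have hfa := hfact w hwU
    have hbound : ‖(g w - 1)‖ ≤ ‖(w - z)‖ / s := by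
      rw [hgm1abs]
      rw [div_le_div_iff₀ (by linarith) hs]
      calc ‖(h w - aC)‖ * s = ‖(h w - aC)‖ * (a*a) := by rw [haa]
        _ ≤ ‖(h w - aC)‖ * (‖(h w + aC)‖ * ‖(h w + aC)‖) := by
            apply mul_le_mul_of_nonneg_left _ (norm_nonneg _)
            nlinarith
        _ = (‖(h w - aC)‖ * ‖(h w + aC)‖) * ‖(h w + aC)‖ := by
            ring
        _ = ‖(w - z)‖ * ‖(h w + aC)‖ := by rw [hfa]
    calc ‖(g w)‖ = ‖((g w - 1) + 1)‖ := by congr 1; ring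
      _ ≤ ‖(g w - 1)‖ + ‖(1:ℂ)‖ := norm_add_le _ _
      _ ≤ 1 + ‖(w - z)‖ / s := by
          simp only [norm_one]
          linarith
  · -- bound far from z
    intro w hw hfar
    have hwU := hKU hw
    have hwp : 1599 * s ≤ ‖(w - p)‖ := by
      have h1 : ‖(w - z)‖ ≤ ‖(w - p)‖ + ‖(p - z)‖ := by
        have := norm_sub_le_norm_sub_add_norm_sub w p z
        linarith
      rw [hpzabs] at h1
      linarith
    have hhabs := habs2 w hwU
    have hha : 39 * a ≤ ‖(h w)‖ := by
      nlinarith [norm_nonneg (h w), haa, ha]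
    have hy : 38 * a ≤ ‖(h w + aC)‖ := by
      have h2 : ‖(h w)‖ ≤ ‖(h w + aC)‖ + a := by
        have heq : h w = (h w + aC) - aC := by ring
        have := norm_sub_le (h w + aC) aC
        rw [← heq, haCabs] at this
        linarith
      linarith
    simp only [hgdef]
    rw [norm_div, norm_mul, haCabs, hdenabs]
    rw [div_le_iff₀ (by linarith)]
    have h2 : ‖(2:ℂ)‖ = 2 := by norm_num
    rw [h2]
    nlinarith

set_option maxHeartbeats 2000000 in
private lemma exists_peak {K : Set ℂ} (hK : IsCompact K) (hKc : IsConnected Kᶜ) {z : ℂ}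
    (hzf : z ∈ frontier K) :
    ∃ f : ℂ → ℂ, ContinuousOn f K ∧ DifferentiableOn ℂ f (interior K) ∧
      f z = 1 ∧ ∀ w ∈ K \ {z}, ‖(f w)‖ < 1 := by
  classical
  have hsk : ∀ k : ℕ, (0:ℝ) < (10000:ℝ)⁻¹ ^ k := fun k => by positivity
  choose g hgc hgd hgz hg18 hgnear hgfar using fun k : ℕ =>
    exists_scale_fn hK hKc hzf (hsk k)
  set c : ℕ → ℝ := fun k => (1/50) * (49/50)^k with hcdef
  have hc0 : ∀ k, 0 < c k := fun k => by simp only [hcdef]; positivity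
  have hcsum : Summable c := by
    apply Summable.mul_left
    exact summable_geometric_of_lt_one (by norm_num) (by norm_num)
  set F : ℕ → ℂ → ℂ := fun k w => ((c k : ℝ) : ℂ) * g k w with hFdef
  set f : ℂ → ℂ := fun w => ∑' k, F k w with hfdef
  have hFnorm : ∀ k w, ‖F k w‖ = c k * ‖(g k w)‖ := by
    intro k w
    simp only [hFdef]
    rw [norm_mul, Complex.norm_real, Real.norm_eq_abs, abs_of_pos (hc0 k)]
  have hFbound : ∀ (k : ℕ), ∀ w ∈ K, ‖F k w‖ ≤ c k * 18 := by
    intro k w hw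
    rw [hFnorm]
    exact mul_le_mul_of_nonneg_left (hg18 k w hw) (hc0 k).le
  have hu : Summable (fun k => c k * 18) := hcsum.mul_right 18
  have hfc : ContinuousOn f K := by
    apply continuousOn_tsum (fun k => continuousOn_const.mul (hgc k)) hu
    exact fun k x hx => hFbound k x hx
  have hfd : DifferentiableOn ℂ f (interior K) :=
    Complex.differentiableOn_tsum_of_summable_norm hu
      (fun k => (differentiableOn_const _).mul (hgd k)) isOpen_interior
      (fun k w hw => hFbound k w (interior_subset hw))
  have hfz : f z = 1 := by
    simp only [hfdef, hFdef]
    have h1 : ∀ k : ℕ, ((c k : ℝ) : ℂ) * g k z = ((1/50 : ℝ):ℂ) * (((49/50:ℝ)):ℂ)^k := by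
      intro k
      rw [hgz k]
      simp only [hcdef]
      push_cast
      ring
    rw [tsum_congr h1, tsum_mul_left, tsum_geometric_of_norm_lt_one (by
      rw [Complex.norm_real, Real.norm_eq_abs,
        abs_of_pos (by norm_num : (0:ℝ) < 49/50)]
      norm_num)]
    have : (1 : ℂ) - ((49/50:ℝ):ℂ) = ((1/50:ℝ):ℂ) := by push_cast; norm_num
    rw [this]
    push_cast
    norm_num
  refine ⟨f, hfc, hfd, hfz, ?_⟩
  rintro w ⟨hwK, hwz⟩
  have hwzne : w - z ≠ 0 := sub_ne_zero.2 (by simpa using hwz)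
  set ρ : ℝ := ‖(w - z)‖ with hρdef
  have hρpos : 0 < ρ := norm_pos_iff.mpr hwzne
  have hexists : ∃ k : ℕ, (10000:ℝ)⁻¹ ^ k ≤ 4*ρ := by
    obtain ⟨n, hn⟩ := exists_pow_lt_of_lt_one (show (0:ℝ) < 4*ρ by linarith)
      (show (10000:ℝ)⁻¹ < 1 by norm_num)
    exact ⟨n, hn.le⟩
  obtain ⟨ν, hν1, hν2⟩ : ∃ ν : ℕ, (10000:ℝ)⁻¹ ^ ν ≤ 4*ρ ∧
      ∀ k, k < ν → 4*ρ < (10000:ℝ)⁻¹ ^ k := by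
    refine ⟨Nat.find hexists, Nat.find_spec hexists, fun k hk => ?_⟩
    have := Nat.find_min hexists hk
    push_neg at this
    exact this
  set b : ℕ → ℝ := fun k =>
    c k * (if k < ν then 1 + ρ * 10000^k else if k < ν + 2 then 18 else 1/19) with hbdef
  have hble : ∀ k, ‖F k w‖ ≤ b k := by
    intro k
    rw [hFnorm]
    simp only [hbdef]
    apply mul_le_mul_of_nonneg_left _ (hc0 k).le
    by_cases h1 : k < ν
    · rw [if_pos h1]
      have h2 := hν2 k h1
      have h3 : ‖(w - z)‖ < (10000:ℝ)⁻¹^k / 4 := by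
        rw [← hρdef]; linarith
      have h4 := hgnear k w hwK h3
      rw [← hρdef] at h4
      have hdiv : ρ / (10000:ℝ)⁻¹^k = ρ * 10000^k := by
        rw [inv_pow, div_eq_mul_inv, inv_inv]
      rw [hdiv] at h4
      exact h4
    · rw [if_neg h1]
      by_cases h2 : k < ν + 2
      · rw [if_pos h2]; exact hg18 k w hwK
      · rw [if_neg h2]
        apply hgfar k w hwK
        have hk2 : ν + 2 ≤ k := by omega
        have hsk2 : (10000:ℝ)⁻¹ ^ k ≤ (10000:ℝ)⁻¹ ^ (ν+2) := by
          apply pow_le_pow_of_le_one (by norm_num) (by norm_num) hk2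
        have hsplit : (10000:ℝ)⁻¹^(ν+2) = (10000:ℝ)⁻¹^ν * ((10000:ℝ)⁻¹)^2 := by
          rw [pow_add]
        rw [← hρdef]
        nlinarith [hν1, hsk (ν+2), hsk k]
  have hb0 : ∀ k, 0 ≤ b k := fun k => le_trans (norm_nonneg _) (hble k)
  have hbM : ∀ k, b k ≤ c k * (19 + ρ * 10000^ν) := by
    intro k
    simp only [hbdef]
    apply mul_le_mul_of_nonneg_left _ (hc0 k).le
    by_cases h1 : k < ν
    · rw [if_pos h1]
      have : (10000:ℝ)^k ≤ (10000:ℝ)^ν := pow_le_pow_right₀ (by norm_num) h1.le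
      nlinarith
    · rw [if_neg h1]
      by_cases h2 : k < ν + 2
      · rw [if_pos h2]
        nlinarith [pow_pos (show (0:ℝ) < 10000 by norm_num) ν]
      · rw [if_neg h2]
        nlinarith [pow_pos (show (0:ℝ) < 10000 by norm_num) ν]
  have hbsum : Summable b :=
    Summable.of_nonneg_of_le hb0 hbM (hcsum.mul_right _)
  have hFsum : Summable (fun k => ‖F k w‖) :=
    Summable.of_nonneg_of_le (fun k => norm_nonneg _) hble hbsum
  have habsle : ‖(f w)‖ ≤ ∑' k, b k := by
    simp only [hfdef]
    calc ‖∑' k, F k w‖ ≤ ∑' k, ‖F k w‖ := norm_tsum_le_tsum_norm hFsum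
      _ ≤ ∑' k, b k := Summable.tsum_le_tsum hble hFsum hbsum
  -- now estimate ∑' b
  have hsplit : ∑' k, b k = (∑ i ∈ Finset.range (ν+2), b i) + ∑' i, b (i + (ν+2)) :=
    (hbsum.sum_add_tsum_nat_add (ν+2)).symm
  have htailval : ∑' i : ℕ, b (i + (ν+2)) = (49/50:ℝ)^(ν+2) * (1/19) := by
    have heq : ∀ i : ℕ, b (i + (ν+2)) = ((1/50) * (49/50)^(ν+2) * (1/19)) * (49/50)^i := by
      intro i
      simp only [hbdef, hcdef]
      rw [if_neg (by omega), if_neg (by omega), pow_add]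
      ring
    rw [tsum_congr heq, tsum_mul_left,
      tsum_geometric_of_lt_one (by norm_num) (by norm_num)]
    norm_num
    ring
  have hheadsplit : ∑ i ∈ Finset.range (ν+2), b i =
      (∑ i ∈ Finset.range ν, b i) + b ν + b (ν+1) := by
    rw [Finset.sum_range_succ, Finset.sum_range_succ]
  have hbν : b ν = c ν * 18 := by
    simp only [hbdef]
    rw [if_neg (by omega), if_pos (by omega)]
  have hbν1 : b (ν+1) = c (ν+1) * 18 := by
    simp only [hbdef]
    rw [if_neg (by omega), if_pos (by omega)]
  have hheadle : ∑ i ∈ Finset.range ν, b i ≤ (1 - (49/50:ℝ)^ν) + (50/9799) * (49/50)^ν := by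
    have hterm : ∀ i ∈ Finset.range ν, b i = (1/50)*(49/50:ℝ)^i + (ρ/50) * 9800^i := by
      intro i hi
      have hi' := Finset.mem_range.1 hi
      simp only [hbdef, hcdef]
      rw [if_pos hi']
      have hmp : (49/50:ℝ)^i * 10000^i = 9800^i := by
        rw [← mul_pow]; norm_num
      linear_combination (ρ/50) * hmp
    rw [Finset.sum_congr rfl hterm, Finset.sum_add_distrib]
    have hconc : True := trivial
    have hgeom1 : ∑ i ∈ Finset.range ν, (1/50)*(49/50:ℝ)^i = 1 - (49/50:ℝ)^ν := by
      rw [← Finset.mul_sum, geom_sum_eq (by norm_num) ν]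
      field_simp
      ring
    have hgeom2 : ∑ i ∈ Finset.range ν, (ρ/50) * (9800:ℝ)^i ≤ (50/9799) * (49/50)^ν := by
      rcases Nat.eq_zero_or_pos ν with hν0 | hνpos
      · rw [hν0]
        simp
        positivity
      · obtain ⟨m, rfl⟩ : ∃ m, ν = m + 1 := ⟨ν - 1, by omega⟩
        have hρm : ρ < (10000:ℝ)⁻¹^m / 4 := by
          have := hν2 m (by omega); linarith
        have hpm : (9800:ℝ)^m * (10000:ℝ)⁻¹^m = (49/50)^m := by
          rw [← mul_pow]; norm_num
        have hkey : ρ * (9800:ℝ)^(m+1) ≤ 2500 * (49/50)^(m+1) := by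
          have h98pos : (0:ℝ) < (9800:ℝ)^m := by positivity
          calc ρ * (9800:ℝ)^(m+1) = ρ * (9800 * 9800^m) := by rw [pow_succ]; ring
            _ ≤ ((10000:ℝ)⁻¹^m/4) * (9800 * 9800^m) := by nlinarith
            _ = 2450 * ((9800:ℝ)^m * (10000:ℝ)⁻¹^m) := by ring
            _ = 2450 * (49/50:ℝ)^m := by rw [hpm]
            _ = 2500 * (49/50:ℝ)^(m+1) := by rw [pow_succ]; ring
        have hgsum : ∑ i ∈ Finset.range (m+1), (9800:ℝ)^i =
            ((9800:ℝ)^(m+1) - 1) / 9799 := by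
          rw [geom_sum_eq (by norm_num) (m+1)]
          norm_num
        rw [← Finset.mul_sum, hgsum]
        rw [div_mul_eq_mul_div, div_le_iff₀ (by norm_num : (0:ℝ) < 50)]
        have h9p : (0:ℝ) < (9800:ℝ)^(m+1) := by positivity
        nlinarith [hρpos]
    rw [hgeom1]
    linarith [hgeom2]
  -- put it together
  have hY : (0:ℝ) < (49/50:ℝ)^ν := by positivity
  have hcν : c ν = (1/50) * (49/50:ℝ)^ν := rfl
  have hcν1 : c (ν+1) = (1/50) * ((49/50:ℝ)^ν * (49/50)) := by
    simp only [hcdef, pow_succ]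
  have hp2 : (49/50:ℝ)^(ν+2) = (49/50:ℝ)^ν * (49/50)^2 := by rw [pow_add]
  have hfinal : ∑' k, b k < 1 := by
    rw [hsplit, htailval, hheadsplit, hbν, hbν1, hcν, hcν1, hp2]
    nlinarith [hheadle, hY]
  calc ‖(f w)‖ ≤ ∑' k, b k := habsle
    _ < 1 := hfinal

private lemma maxmod {K : Set ℂ} (hK : IsCompact K) {f : ℂ → ℂ} {C : ℝ}
    (hfc : ContinuousOn f K) (hfd : DifferentiableOn ℂ f (interior K))
    (hC : ∀ w ∈ K \ interior K, ‖(f w)‖ ≤ C) {z : ℂ} (hz : z ∈ interior K) :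
    ‖(f z)‖ ≤ C := by
  have hKcl : IsClosed K := hK.isClosed
  have hcl : closure (interior K) ⊆ K := closure_minimal interior_subset hKcl
  apply Complex.norm_le_of_forall_mem_frontier_norm_le
    (hK.isBounded.subset interior_subset) ⟨hfd, hfc.mono hcl⟩
  · intro w hw
    apply hC
    rw [isOpen_interior.frontier_eq] at hw
    exact ⟨hcl hw.1, hw.2⟩
  · exact subset_closure hz

/-- For `z ∈ K`: `z ∈ ∂K` iff `z` is a peak point for `A(K)` iff `z` satisfies
the Bishop 1/4–3/4 property. -/
theorem frontier_iff_peak_iff_bishop (K : Set ℂ) (hK : IsCompact K)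
    (hKc : IsConnected Kᶜ) (z : ℂ) (hz : z ∈ K) :
    ((z ∈ frontier K) ↔
      (∃ f : ℂ → ℂ, ContinuousOn f K ∧ DifferentiableOn ℂ f (interior K) ∧
        f z = 1 ∧ ∀ w ∈ K \ {z}, ‖f w‖ < 1)) ∧
    ((z ∈ frontier K) ↔
      (∀ U : Set ℂ, IsOpen U → z ∈ U →
        ∃ f : ℂ → ℂ, ContinuousOn f K ∧ DifferentiableOn ℂ f (interior K) ∧
          (∀ w ∈ K, ‖f w‖ ≤ 1) ∧
          (∃ t : ℝ, f z = (t : ℂ) ∧ 3 / 4 < t) ∧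
          ∀ w ∈ K \ U, ‖f w‖ < 1 / 4)) := by
  have hKcl : IsClosed K := hK.isClosed
  have hfrK : frontier K = K \ interior K := hKcl.frontier_eq
  -- peak implies boundary
  have hp2f : (∃ f : ℂ → ℂ, ContinuousOn f K ∧ DifferentiableOn ℂ f (interior K) ∧
      f z = 1 ∧ ∀ w ∈ K \ {z}, ‖(f w)‖ < 1) → z ∈ frontier K := by
    rintro ⟨f, hfc, hfd, hfz, hflt⟩
    rw [hfrK]
    refine ⟨hz, fun hzi => ?_⟩
    have hSne : (K \ interior K).Nonempty := by
      by_contra hemp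
      rw [Set.not_nonempty_iff_eq_empty, Set.diff_eq_empty] at hemp
      have hKopen : IsOpen K := by
        have heq : interior K = K := Set.Subset.antisymm interior_subset hemp
        rw [← heq]; exact isOpen_interior
      obtain ⟨w, hw⟩ := hKc.nonempty
      have hKuniv : K = univ := by
        rcases isClopen_iff.1 ⟨hKcl, hKopen⟩ with h | h
        · exact absurd h (Set.nonempty_iff_ne_empty.1 ⟨z, hz⟩)
        · exact h
      exact hw (by rw [hKuniv]; trivial)
    have hScomp : IsCompact (K \ interior K) := hK.diff isOpen_interior
    obtain ⟨w₀, hw₀, hmax⟩ := hScomp.exists_isMaxOn hSne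
      (continuous_norm.comp_continuousOn (hfc.mono Set.diff_subset))
    have hw₀ne : w₀ ∈ K \ {z} := ⟨hw₀.1, fun h => hw₀.2 ((Set.mem_singleton_iff.1 h) ▸ hzi)⟩
    have hC1 : ‖(f w₀)‖ < 1 := hflt w₀ hw₀ne
    have hbound := maxmod hK hfc hfd (fun w hw => (isMaxOn_iff.1 hmax) w hw) hzi
    rw [hfz] at hbound
    simp only [Function.comp_apply, norm_one] at hbound
    linarith
  -- bishop implies boundary
  have hb2f : (∀ U : Set ℂ, IsOpen U → z ∈ U →
      ∃ f : ℂ → ℂ, ContinuousOn f K ∧ DifferentiableOn ℂ f (interior K) ∧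
        (∀ w ∈ K, ‖(f w)‖ ≤ 1) ∧
        (∃ t : ℝ, f z = (t : ℂ) ∧ 3 / 4 < t) ∧
        ∀ w ∈ K \ U, ‖(f w)‖ < 1 / 4) → z ∈ frontier K := by
    intro hb
    rw [hfrK]
    refine ⟨hz, fun hzi => ?_⟩
    obtain ⟨f, hfc, hfd, hle1, ⟨t, hft, htgt⟩, hsmall⟩ := hb (interior K) isOpen_interior hzi
    have h14 : ∀ w ∈ K \ interior K, ‖(f w)‖ ≤ 1/4 := fun w hw => (hsmall w hw).le
    have hbound := maxmod hK hfc hfd h14 hzi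
    rw [hft, Complex.norm_real, Real.norm_eq_abs] at hbound
    have : t ≤ 1/4 := le_trans (le_abs_self t) hbound
    linarith
  -- boundary implies bishop
  have hf2b : z ∈ frontier K → ∀ U : Set ℂ, IsOpen U → z ∈ U →
      ∃ f : ℂ → ℂ, ContinuousOn f K ∧ DifferentiableOn ℂ f (interior K) ∧
        (∀ w ∈ K, ‖(f w)‖ ≤ 1) ∧
        (∃ t : ℝ, f z = (t : ℂ) ∧ 3 / 4 < t) ∧
        ∀ w ∈ K \ U, ‖(f w)‖ < 1 / 4 := by
    intro hzf U hU hzU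
    obtain ⟨f, hfc, hfd, hfz, hflt⟩ := exists_peak hK hKc hzf
    have hfle : ∀ w ∈ K, ‖(f w)‖ ≤ 1 := by
      intro w hw
      by_cases hwz : w = z
      · rw [hwz, hfz]; simp
      · exact (hflt w ⟨hw, hwz⟩).le
    rcases Set.eq_empty_or_nonempty (K \ U) with hemp | hne
    · refine ⟨f, hfc, hfd, hfle, ⟨1, by rw [hfz]; norm_num, by norm_num⟩, ?_⟩
      rw [hemp]
      simp
    · have hScomp : IsCompact (K \ U) := hK.diff hU
      obtain ⟨w₀, hw₀, hmax⟩ := hScomp.exists_isMaxOn hne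
        (continuous_norm.comp_continuousOn (hfc.mono Set.diff_subset))
      have hw₀z : w₀ ≠ z := fun h => hw₀.2 (h ▸ hzU)
      have hc1 : ‖(f w₀)‖ < 1 := hflt w₀ ⟨hw₀.1, hw₀z⟩
      obtain ⟨n, hn⟩ := exists_pow_lt_of_lt_one (show (0:ℝ) < 1/4 by norm_num) hc1
      refine ⟨fun w => (f w)^n, hfc.pow n, hfd.pow n, ?_,
        ⟨1, by show (f z)^n = _; rw [hfz]; simp, by norm_num⟩, ?_⟩
      · intro w hw
        rw [norm_pow]
        exact pow_le_one₀ (norm_nonneg _) (hfle w hw)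
      · intro w hw
        rw [norm_pow]
        calc (‖(f w)‖)^n ≤ (‖(f w₀)‖)^n :=
            pow_le_pow_left₀ (norm_nonneg _) ((isMaxOn_iff.1 hmax) w hw) n
          _ < 1/4 := hn
  exact ⟨⟨fun hzf => exists_peak hK hKc hzf, hp2f⟩, ⟨fun hzf => hf2b hzf, hb2f⟩⟩
end
end

section
/- Let K be a compact subset of ℂ with ℂ \ K connected and with nonempty interior, and let z₁ and z₂ be two distinct points of ∂K, each of which is a type I boundary point and circularly accessible. Then there exists a kissing path with respect to z₁ and z₂: an injective continuous map Γ from the unit circle {w ∈ ℂ : |w| = 1} into ℂ such that z₁ and z₂ belong to the image of Γ, the image of Γ meets K exactly in {z₁, z₂}, and every bounded connected component of ℂ \ (image of Γ) is disjoint from K. -/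
open Metric Set

noncomputable section

namespace KissingPath

/-- The radial "drag" map: moves the center `m` of a ball of radius `R` by `a`,
identity outside the ball. -/
def dragFun (m : ℂ) (R : ℝ) (a : ℂ) (x : ℂ) : ℂ :=
  x + (max (1 - ‖x - m‖ / R) 0) • a

lemma dragFun_continuous (m : ℂ) (R : ℝ) (a : ℂ) : Continuous (dragFun m R a) := by
  unfold dragFun
  fun_prop

lemma dragFun_apply_of_le (m : ℂ) {R : ℝ} (hR : 0 < R) (a : ℂ) {x : ℂ}
    (hx : R ≤ ‖x - m‖) : dragFun m R a x = x := by
  have h1 : 1 - ‖x - m‖ / R ≤ 0 := by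
    rw [sub_nonpos]
    exact (one_le_div hR).2 hx
  have h2 : max (1 - ‖x - m‖ / R) 0 = 0 := max_eq_right h1
  rw [dragFun, h2, zero_smul, add_zero]

lemma dragFun_coef_abs_le {m : ℂ} {R : ℝ} (hR : 0 < R) (x y : ℂ) :
    |(max (1 - ‖x - m‖ / R) 0) - (max (1 - ‖y - m‖ / R) 0)| ≤ ‖x - y‖ / R := by
  refine (abs_max_sub_max_le_abs _ _ _).trans ?_
  have h : (1 - ‖x - m‖ / R) - (1 - ‖y - m‖ / R) = (‖y - m‖ - ‖x - m‖) / R := by ring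
  rw [h, abs_div, abs_of_pos hR]
  gcongr
  calc |‖y - m‖ - ‖x - m‖| ≤ ‖(y - m) - (x - m)‖ := abs_norm_sub_norm_le _ _
    _ = ‖x - y‖ := by rw [← norm_neg]; ring_nf

lemma dragFun_sub (m : ℂ) (R : ℝ) (a : ℂ) (x y : ℂ) :
    dragFun m R a x - dragFun m R a y
      = (x - y) + ((max (1 - ‖x - m‖ / R) 0) - (max (1 - ‖y - m‖ / R) 0)) • a := by
  simp only [dragFun, sub_smul]
  ring

lemma dragFun_injective {m : ℂ} {R : ℝ} (hR : 0 < R) {a : ℂ} (ha : ‖a‖ < R) :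
    Function.Injective (dragFun m R a) := by
  intro x y hxy
  by_contra hne
  have hsub := dragFun_sub m R a x y
  rw [hxy, sub_self] at hsub
  have hxy' : x - y = -(((max (1 - ‖x - m‖ / R) 0) - (max (1 - ‖y - m‖ / R) 0)) • a) := by
    linear_combination -hsub
  have hnorm : ‖x - y‖ ≤ (‖x - y‖ / R) * ‖a‖ := by
    calc ‖x - y‖ = |(max (1 - ‖x - m‖ / R) 0) - (max (1 - ‖y - m‖ / R) 0)| * ‖a‖ := by
          rw [hxy', norm_neg, norm_smul, Real.norm_eq_abs]
      _ ≤ (‖x - y‖ / R) * ‖a‖ := by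
          gcongr
          exact dragFun_coef_abs_le hR x y
  have hpos : 0 < ‖x - y‖ := by
    rw [norm_pos_iff, sub_ne_zero]
    exact hne
  have hlt : ‖x - y‖ < ‖x - y‖ := by
    calc ‖x - y‖ ≤ (‖x - y‖ / R) * ‖a‖ := hnorm
      _ < (‖x - y‖ / R) * R := by
          have h2 : 0 < ‖x - y‖ / R := by positivity
          exact (mul_lt_mul_iff_right₀ h2).2 ha
      _ = ‖x - y‖ := by field_simp
  exact absurd hlt (lt_irrefl _)

lemma dragFun_surjective {m : ℂ} {R : ℝ} (hR : 0 < R) {a : ℂ} (ha : ‖a‖ ≤ R) :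
    Function.Surjective (dragFun m R a) := by
  intro w
  rcases le_or_gt R ‖w - m‖ with h | h
  · exact ⟨w, dragFun_apply_of_le m hR a h⟩
  · have hgc : ContinuousOn (fun s : ℝ => ‖w - m - (1 - s) • a‖ - s * R) (Icc 0 1) := by
      apply Continuous.continuousOn
      fun_prop
    have hg1 : ‖w - m - (1 - (1:ℝ)) • a‖ - 1 * R < 0 := by
      have he : (1:ℝ) - 1 = 0 := by norm_num
      rw [he, zero_smul, sub_zero, one_mul]
      linarith
    have hg0 : (0:ℝ) ≤ ‖w - m - (1 - (0:ℝ)) • a‖ - 0 * R := by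
      rw [zero_mul, sub_zero]
      positivity
    have hmem : (0 : ℝ) ∈ Icc (‖w - m - (1 - (1:ℝ)) • a‖ - 1 * R)
        (‖w - m - (1 - (0:ℝ)) • a‖ - 0 * R) := ⟨le_of_lt hg1, hg0⟩
    obtain ⟨s, hs, hgs⟩ := intermediate_value_Icc' (by norm_num : (0:ℝ) ≤ 1) hgc hmem
    refine ⟨w - (1 - s) • a, ?_⟩
    simp only at hgs
    have hnorm : ‖w - (1 - s) • a - m‖ = s * R := by
      have h2 : w - (1 - s) • a - m = w - m - (1 - s) • a := by ring
      rw [h2]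
      linarith [hgs]
    unfold dragFun
    rw [hnorm]
    have hcoef : max (1 - s * R / R) 0 = 1 - s := by
      rw [mul_div_assoc, div_self hR.ne', mul_one]
      exact max_eq_left (by linarith [hs.2])
    rw [hcoef]
    ring_nf


lemma dragFun_apply_center (m : ℂ) {R : ℝ} (hR : 0 < R) (a : ℂ) :
    dragFun m R a m = m + a := by
  unfold dragFun
  rw [sub_self, norm_zero, zero_div, sub_zero, max_eq_left (by norm_num : (0:ℝ) ≤ 1), one_smul]

/-- The drag map sends the closed ball into itself (needs `‖a‖ ≤ R`). -/
lemma dragFun_mem_closedBall {m : ℂ} {R : ℝ} (hR : 0 < R) {a : ℂ} (ha : ‖a‖ ≤ R)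
    {x : ℂ} (hx : x ∈ closedBall m R) : dragFun m R a x ∈ closedBall m R := by
  rw [mem_closedBall, dist_eq_norm] at hx ⊢
  have hcoef : max (1 - ‖x - m‖ / R) 0 = 1 - ‖x - m‖ / R := by
    apply max_eq_left
    rw [sub_nonneg]
    exact div_le_one_of_le₀ hx hR.le
  calc ‖dragFun m R a x - m‖ = ‖(x - m) + (max (1 - ‖x - m‖ / R) 0) • a‖ := by
        unfold dragFun; ring_nf
    _ ≤ ‖x - m‖ + ‖(max (1 - ‖x - m‖ / R) 0) • a‖ := norm_add_le _ _
    _ = ‖x - m‖ + (1 - ‖x - m‖ / R) * ‖a‖ := by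
        rw [hcoef, norm_smul, Real.norm_eq_abs, abs_of_nonneg]
        rw [sub_nonneg]
        exact div_le_one_of_le₀ hx hR.le
    _ ≤ ‖x - m‖ + (1 - ‖x - m‖ / R) * R := by
        gcongr
        rw [sub_nonneg]
        exact div_le_one_of_le₀ hx hR.le
    _ = R := by field_simp; ring
    
/-- The drag map as a homeomorphism of `ℂ` (for `‖a‖ < R`). -/
def dragHomeo (m : ℂ) {R : ℝ} (hR : 0 < R) {a : ℂ} (ha : ‖a‖ < R) : ℂ ≃ₜ ℂ := by
  have hbij : Function.Bijective (dragFun m R a) :=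
    ⟨dragFun_injective hR ha, dragFun_surjective hR ha.le⟩
  have hcont : Continuous (dragFun m R a) := dragFun_continuous m R a
  have hclosed : IsClosedMap (dragFun m R a) := by
    intro C hC
    have himg : dragFun m R a '' C =
        (dragFun m R a '' (C ∩ closedBall m R)) ∪ (C ∩ (ball m R)ᶜ) := by
      apply Subset.antisymm
      · rintro _ ⟨x, hxC, rfl⟩
        rcases le_or_gt ‖x - m‖ R with h | h
        · exact Or.inl ⟨x, ⟨hxC, by rwa [mem_closedBall, dist_eq_norm]⟩, rfl⟩
        · have : dragFun m R a x = x := dragFun_apply_of_le m hR a h.le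
          rw [this]
          exact Or.inr ⟨hxC, by rw [mem_compl_iff, mem_ball, dist_eq_norm]; linarith⟩
      · rintro x (⟨y, ⟨hyC, _⟩, rfl⟩ | ⟨hxC, hxB⟩)
        · exact ⟨y, hyC, rfl⟩
        · have hxn : R ≤ ‖x - m‖ := by
            rw [mem_compl_iff, mem_ball, dist_eq_norm, not_lt] at hxB
            exact hxB
          exact ⟨x, hxC, dragFun_apply_of_le m hR a hxn⟩
    rw [himg]
    refine IsClosed.union ?_ (hC.inter isOpen_ball.isClosed_compl)
    exact (((isCompact_closedBall m R).inter_left hC).image hcont).isClosed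
  have hopen : IsOpenMap (dragFun m R a) := by
    intro U hU
    have h1 : dragFun m R a '' Uᶜ = (dragFun m R a '' U)ᶜ := Set.image_compl_eq hbij
    have h2 : IsClosed (dragFun m R a '' Uᶜ) := hclosed _ hU.isClosed_compl
    rw [h1] at h2
    simpa using h2.isOpen_compl
  exact Equiv.toHomeomorphOfContinuousOpen (Equiv.ofBijective _ hbij) hcont hopen

@[simp] lemma dragHomeo_apply (m : ℂ) {R : ℝ} (hR : 0 < R) {a : ℂ} (ha : ‖a‖ < R) (x : ℂ) :
    dragHomeo m hR ha x = dragFun m R a x := rfl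

/-! ### Pinch lemmas -/

lemma coef_le_one (m : ℂ) (R : ℝ) (hR : 0 < R) (x : ℂ) :
    max (1 - ‖x - m‖ / R) 0 ≤ 1 := by
  apply max_le _ zero_le_one
  have : 0 ≤ ‖x - m‖ / R := by positivity
  linarith

lemma mem_segment_of_coef {x₀ a : ℂ} {s : ℝ} (hs0 : 0 ≤ s) (hs1 : s ≤ 1) :
    x₀ + s • a ∈ segment ℝ x₀ (x₀ + a) := by
  rw [segment_eq_image']
  exact ⟨s, ⟨hs0, hs1⟩, by simp⟩

lemma segment_mem_iff {x₀ a : ℂ} {x : ℂ} :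
    x ∈ segment ℝ x₀ (x₀ + a) ↔ ∃ s : ℝ, 0 ≤ s ∧ s ≤ 1 ∧ x = x₀ + s • a := by
  rw [segment_eq_image']
  constructor
  · rintro ⟨s, ⟨hs0, hs1⟩, rfl⟩
    exact ⟨s, hs0, hs1, by simp⟩
  · rintro ⟨s, hs0, hs1, rfl⟩
    exact ⟨s, ⟨hs0, hs1⟩, by simp⟩

lemma pinch_apply_segment {x₀ a : ℂ} (ha : a ≠ 0) {x : ℂ}
    (hx : x ∈ segment ℝ x₀ (x₀ + a)) : dragFun x₀ ‖a‖ a x = x₀ + a := by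
  rw [segment_mem_iff] at hx
  obtain ⟨s, hs0, hs1, rfl⟩ := hx
  have hρ : (0:ℝ) < ‖a‖ := norm_pos_iff.2 ha
  have hd : ‖x₀ + s • a - x₀‖ = s * ‖a‖ := by
    rw [add_sub_cancel_left, norm_smul, Real.norm_eq_abs, abs_of_nonneg hs0]
  unfold dragFun
  rw [hd]
  have hcoef : max (1 - s * ‖a‖ / ‖a‖ ) 0 = 1 - s := by
    rw [mul_div_assoc, div_self hρ.ne', mul_one]
    exact max_eq_left (by linarith)
  rw [hcoef]
  have hsum : s • a + (1 - s) • a = a := by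
    rw [← add_smul]
    norm_num
  rw [add_assoc, hsum]

lemma pinch_eq_top_iff {x₀ a : ℂ} (ha : a ≠ 0) {x : ℂ} :
    dragFun x₀ ‖a‖ a x = x₀ + a ↔ x ∈ segment ℝ x₀ (x₀ + a) := by
  refine ⟨fun h => ?_, pinch_apply_segment ha⟩
  have hρ : (0:ℝ) < ‖a‖ := norm_pos_iff.2 ha
  set c := max (1 - ‖x - x₀‖ / ‖a‖) 0 with hc
  have hx : x = x₀ + (1 - c) • a := by
    have h1 : x + c • a = x₀ + a := h
    have h2 : x = x₀ + a - c • a := by linear_combination h1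
    rw [h2, sub_smul, one_smul]
    ring
  have hc0 : 0 ≤ c := le_max_right _ _
  have hc1 : c ≤ 1 := coef_le_one _ _ hρ _
  rw [hx]
  exact mem_segment_of_coef (by linarith) (by linarith)

lemma pinch_collision_aux {x₀ a : ℂ} (ha : a ≠ 0) {x y : ℂ}
    (hxy : dragFun x₀ ‖a‖ a x = dragFun x₀ ‖a‖ a y) (hne : x ≠ y)
    (hle : max (1 - ‖x - x₀‖ / ‖a‖) 0 ≤ max (1 - ‖y - x₀‖ / ‖a‖) 0) :
    x ∈ segment ℝ x₀ (x₀ + a) ∧ y ∈ segment ℝ x₀ (x₀ + a) := by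
  have hρ : (0:ℝ) < ‖a‖ := norm_pos_iff.2 ha
  have hsub := dragFun_sub x₀ ‖a‖ a x y
  rw [hxy, sub_self] at hsub
  have hkey : x - y = (max (1 - ‖y - x₀‖ / ‖a‖) 0 - max (1 - ‖x - x₀‖ / ‖a‖) 0) • a := by
    have h2 : (max (1 - ‖y - x₀‖ / ‖a‖) 0 - max (1 - ‖x - x₀‖ / ‖a‖) 0) • a
        = -((max (1 - ‖x - x₀‖ / ‖a‖) 0 - max (1 - ‖y - x₀‖ / ‖a‖) 0) • a) := by
      rw [← neg_smul]
      congr 1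
      ring
    rw [h2]
    linear_combination -hsub
  set ρ := ‖a‖ with hρdef
  set cx := max (1 - ‖x - x₀‖ / ρ) 0 with hcx
  set cy := max (1 - ‖y - x₀‖ / ρ) 0 with hcy
  set dx := ‖x - x₀‖ with hdx
  set dy := ‖y - x₀‖ with hdy
  set lam := cy - cx with hlam
  have hcx0 : (0:ℝ) ≤ cx := le_max_right _ _
  have hlam0 : 0 ≤ lam := by rw [hlam]; linarith
  have hlampos : 0 < lam := by
    rcases hlam0.lt_or_eq with h | h
    · exact h
    · exfalso
      apply hne
      rw [← sub_eq_zero, hkey, ← h, zero_smul]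
  have hcy_pos : 0 < cy := by
    have := hlam
    linarith
  have hdyρ : dy < ρ := by
    by_contra hge
    push_neg at hge
    have h1 : 1 - dy / ρ ≤ 0 := by
      rw [sub_nonpos]
      exact (one_le_div hρ).2 hge
    have h2 : cy = 0 := max_eq_right h1
    linarith
  have hcyeq : cy = 1 - dy / ρ := by
    apply max_eq_left
    have : dy / ρ < 1 := (div_lt_one hρ).2 hdyρ
    linarith
  have hxynorm : ‖x - y‖ = lam * ρ := by
    rw [hkey, norm_smul, Real.norm_eq_abs, abs_of_nonneg hlam0]
  have hdx_le : dx ≤ lam * ρ + dy := by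
    have h1 : x - x₀ = (x - y) + (y - x₀) := by ring
    calc dx = ‖(x - y) + (y - x₀)‖ := by rw [hdx, ← h1]
      _ ≤ ‖x - y‖ + ‖y - x₀‖ := norm_add_le _ _
      _ = lam * ρ + dy := by rw [hxynorm, hdy]
  have hcx_ge : 1 - dx / ρ ≤ cx := le_max_left _ _
  have hlam_le : lam * ρ ≤ dx - dy := by
    have h1 : lam ≤ (dx - dy) / ρ := by
      have h2 : (1 - dy/ρ) - (1 - dx/ρ) = (dx - dy) / ρ := by ring
      rw [hlam, hcyeq, ← h2]
      linarith
    calc lam * ρ ≤ ((dx - dy) / ρ) * ρ := mul_le_mul_of_nonneg_right h1 hρ.le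
      _ = dx - dy := by field_simp
  have hdx_eq : dx = lam * ρ + dy := le_antisymm hdx_le (by linarith)
  have hdxρ : dx ≤ ρ := by
    have hcxeq : cx = 1 - dx / ρ := by
      have h1 : cx = cy - lam := by rw [hlam]; ring
      rw [h1, hcyeq, hdx_eq]
      field_simp
      ring
    have h3 : 0 ≤ 1 - dx / ρ := hcxeq ▸ hcx0
    have h4 : dx / ρ ≤ 1 := by linarith
    calc dx = (dx / ρ) * ρ := by field_simp
      _ ≤ 1 * ρ := mul_le_mul_of_nonneg_right h4 hρ.le
      _ = ρ := one_mul ρ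
  have hray : SameRay ℝ (x - y) (y - x₀) := by
    rw [sameRay_iff_norm_add]
    have h1 : (x - y) + (y - x₀) = x - x₀ := by ring
    rw [h1, ← hdx, hxynorm, ← hdy, hdx_eq]
  have hxyne : x - y ≠ 0 := sub_ne_zero.2 hne
  obtain ⟨t, ht0, htEq⟩ := (exists_nonneg_left_iff_sameRay (R := ℝ) hxyne).2 hray
  have hy : y - x₀ = (t * lam) • a := by
    rw [← htEq, hkey, smul_smul]
  set s := t * lam with hs
  have hs0 : 0 ≤ s := mul_nonneg ht0 hlam0
  have hdy_eq : dy = s * ρ := by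
    rw [hdy, show y - x₀ = s • a from hy, norm_smul, Real.norm_eq_abs, abs_of_nonneg hs0]
  have hsl : dx = (s + lam) * ρ := by rw [hdx_eq, hdy_eq]; ring
  have hsl1 : s + lam ≤ 1 := by
    by_contra hgt
    push_neg at hgt
    have h5 : ρ < (s + lam) * ρ := by
      calc ρ = 1 * ρ := (one_mul ρ).symm
        _ < (s + lam) * ρ := mul_lt_mul_of_pos_right hgt hρ
    linarith [hsl ▸ hdxρ]
  have hs1 : s ≤ 1 := by linarith
  have hy_mem : y ∈ segment ℝ x₀ (x₀ + a) := by
    have h6 : y = x₀ + s • a := by linear_combination hy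
    rw [h6]
    exact mem_segment_of_coef hs0 hs1
  have hx_mem : x ∈ segment ℝ x₀ (x₀ + a) := by
    have h7 : x = x₀ + (s + lam) • a := by
      have h8 : (s + lam) • a = s • a + lam • a := add_smul s lam a
      rw [h8]
      linear_combination hy + hkey
    rw [h7]
    exact mem_segment_of_coef (by linarith) hsl1
  exact ⟨hx_mem, hy_mem⟩

lemma pinch_collision {x₀ a : ℂ} (ha : a ≠ 0) {x y : ℂ}
    (hxy : dragFun x₀ ‖a‖ a x = dragFun x₀ ‖a‖ a y) :
    x = y ∨ (x ∈ segment ℝ x₀ (x₀ + a) ∧ y ∈ segment ℝ x₀ (x₀ + a)) := by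
  by_cases hne : x = y
  · exact Or.inl hne
  · rcases le_total (max (1 - ‖x - x₀‖ / ‖a‖) 0) (max (1 - ‖y - x₀‖ / ‖a‖) 0) with h | h
    · exact Or.inr (pinch_collision_aux ha hxy hne h)
    · exact Or.inr (pinch_collision_aux ha hxy.symm (Ne.symm hne) h).symm

/-! ### Homogeneity: supported homeomorphisms of the plane -/

lemma homeo_symm_fix {h : ℂ ≃ₜ ℂ} {Q : Set ℂ} (hfix : ∀ x ∉ Q, h x = x) :
    ∀ x ∉ Q, h.symm x = x := by
  intro y hy
  by_cases hmem : h.symm y ∈ Q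
  · exfalso
    have h1 : h (h.symm y) = y := h.apply_symm_apply y
    have h2 : h y = y := hfix y hy
    have h3 : h.symm y = y := h.injective (by rw [h1, h2])
    rw [h3] at hmem
    exact hy hmem
  · have h4 := hfix _ hmem
    rw [h.apply_symm_apply] at h4
    exact h4.symm

theorem exists_supported_homeo {U : Set ℂ} (hUo : IsOpen U) (hUc : IsPreconnected U)
    {p q : ℂ} (hp : p ∈ U) (hq : q ∈ U) :
    ∃ (h : ℂ ≃ₜ ℂ) (Q : Set ℂ), IsCompact Q ∧ Q ⊆ U ∧ (∀ x ∉ Q, h x = x) ∧ h p = q := by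
  set T : Set ℂ := {z | z ∈ U ∧ ∃ (h : ℂ ≃ₜ ℂ) (Q : Set ℂ),
      IsCompact Q ∧ Q ⊆ U ∧ (∀ x ∉ Q, h x = x) ∧ h p = z} with hT
  have hpT : p ∈ T := by
    refine ⟨hp, Homeomorph.refl ℂ, ∅, isCompact_empty, empty_subset _, fun x _ => rfl, rfl⟩
  have key : ∀ z ∈ U, ∃ ε : ℝ, 0 < ε ∧ ball z ε ⊆ U ∧
      ∀ w ∈ ball z ε, (z ∈ T ↔ w ∈ T) := by
    intro z hz
    obtain ⟨ε, hεpos, hball⟩ := Metric.isOpen_iff.1 hUo z hz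
    refine ⟨ε / 2, by linarith, ?_, ?_⟩
    · exact (ball_subset_ball (by linarith)).trans hball
    · intro w hw
      have hwU : w ∈ U := hball (ball_subset_ball (by linarith) hw)
      have hcb : closedBall z (ε / 2) ⊆ U := by
        refine subset_trans ?_ hball
        intro x hx
        rw [mem_closedBall] at hx
        rw [mem_ball]
        linarith
      have hanorm : ‖w - z - 0‖ < ε / 2 := by
        rw [sub_zero, ← dist_eq_norm]
        exact hw
      rw [sub_zero] at hanorm
      set g := dragHomeo z (by linarith : (0:ℝ) < ε / 2) hanorm with hg
      have hgz : g z = w := by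
        rw [hg, dragHomeo_apply, dragFun_apply_center z (by linarith)]
        ring
      have hgfix : ∀ x ∉ closedBall z (ε / 2), g x = x := by
        intro x hx
        rw [mem_closedBall, not_le, dist_eq_norm] at hx
        exact dragFun_apply_of_le z (by linarith) _ hx.le
      constructor
      · rintro ⟨_, h, Q, hQc, hQU, hfix, hhp⟩
        refine ⟨hwU, h.trans g, Q ∪ closedBall z (ε / 2),
          hQc.union (isCompact_closedBall _ _), union_subset hQU hcb, ?_, ?_⟩
        · intro x hx
          rw [mem_union] at hx
          push_neg at hx
          show g (h x) = x
          rw [hfix x hx.1, hgfix x hx.2]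
        · show g (h p) = w
          rw [hhp, hgz]
      · rintro ⟨_, h, Q, hQc, hQU, hfix, hhp⟩
        refine ⟨hz, h.trans g.symm, Q ∪ closedBall z (ε / 2),
          hQc.union (isCompact_closedBall _ _), union_subset hQU hcb, ?_, ?_⟩
        · intro x hx
          rw [mem_union] at hx
          push_neg at hx
          show g.symm (h x) = x
          rw [hfix x hx.1, homeo_symm_fix hgfix x hx.2]
        · show g.symm (h p) = z
          rw [hhp, ← hgz, Homeomorph.symm_apply_apply]
  choose! ε hεpos hball hiff using key
  have hqT : q ∈ T := by
    by_contra hqT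
    set A := ⋃ z ∈ {z | z ∈ U ∧ z ∈ T}, ball z (ε z) with hA
    set B := ⋃ z ∈ {z | z ∈ U ∧ z ∉ T}, ball z (ε z) with hB
    have hAo : IsOpen A := isOpen_biUnion fun z _ => isOpen_ball
    have hBo : IsOpen B := isOpen_biUnion fun z _ => isOpen_ball
    have hcov : U ⊆ A ∪ B := by
      intro z hz
      by_cases hzT : z ∈ T
      · exact Or.inl (mem_biUnion ⟨hz, hzT⟩ (mem_ball_self (hεpos z hz)))
      · exact Or.inr (mem_biUnion ⟨hz, hzT⟩ (mem_ball_self (hεpos z hz)))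
    have hUA : (U ∩ A).Nonempty :=
      ⟨p, hp, mem_biUnion ⟨hp, hpT⟩ (mem_ball_self (hεpos p hp))⟩
    have hUB : (U ∩ B).Nonempty :=
      ⟨q, hq, mem_biUnion ⟨hq, hqT⟩ (mem_ball_self (hεpos q hq))⟩
    obtain ⟨x, hxU, hxA, hxB⟩ := hUc A B hAo hBo hcov hUA hUB
    obtain ⟨z₁, hz₁, hxz₁⟩ := mem_iUnion₂.1 hxA
    obtain ⟨z₂, hz₂, hxz₂⟩ := mem_iUnion₂.1 hxB
    have h1 : x ∈ T := (hiff z₁ hz₁.1 x hxz₁).1 hz₁.2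
    have h2 : x ∉ T := fun hxT => hz₂.2 ((hiff z₂ hz₂.1 x hxz₂).2 hxT)
    exact h2 h1
  exact hqT.2

/-! ### Complement of a closed ball is path connected -/

lemma one_lt_rank_ℂ : (1 : Cardinal) < Module.rank ℝ ℂ := by
  rw [Complex.rank_real_complex]
  norm_num

lemma sphere_subset_compl_closedBall {c : ℂ} {r R : ℝ} (h : r < R) :
    Metric.sphere c R ⊆ (closedBall c r)ᶜ := by
  intro x hx
  rw [mem_sphere] at hx
  rw [mem_compl_iff, mem_closedBall, not_le, hx]
  exact h

lemma isPathConnected_compl_closedBall (c : ℂ) {r : ℝ} (hr : 0 < r) :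
    IsPathConnected (closedBall c r)ᶜ := by
  have hsph : IsPathConnected (Metric.sphere c (r + 1)) :=
    isPathConnected_sphere one_lt_rank_ℂ c (by linarith)
  set b := c + ((r + 1 : ℝ) : ℂ) with hb
  have hbs : b ∈ Metric.sphere c (r + 1) := by
    rw [mem_sphere, dist_eq_norm, hb]
    simp only [add_sub_cancel_left]
    rw [Complex.norm_real, Real.norm_eq_abs, abs_of_pos (by linarith : (0:ℝ) < r + 1)]
  have hbc : b ∈ (closedBall c r)ᶜ := sphere_subset_compl_closedBall (by linarith) hbs
  have hjoin : ∀ y ∈ (closedBall c r)ᶜ,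
      JoinedIn (closedBall c r)ᶜ y (c + ((r + 1) / dist y c) • (y - c)) ∧
      (c + ((r + 1) / dist y c) • (y - c)) ∈ Metric.sphere c (r + 1) := by
    intro y hy
    rw [mem_compl_iff, mem_closedBall, not_le] at hy
    have hd : 0 < dist y c := lt_trans hr hy
    set k := (r + 1) / dist y c with hk
    have hkpos : 0 < k := by rw [hk]; positivity
    set y' := c + k • (y - c) with hy'
    have hy's : y' ∈ Metric.sphere c (r + 1) := by
      rw [mem_sphere, dist_eq_norm, hy', add_sub_cancel_left, norm_smul, Real.norm_eq_abs,
        abs_of_pos hkpos, ← dist_eq_norm, hk]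
      field_simp
    have hseg : segment ℝ y y' ⊆ (closedBall c r)ᶜ := by
      intro w hw
      rw [segment_eq_image'] at hw
      obtain ⟨t, ⟨ht0, ht1⟩, rfl⟩ := hw
      rw [mem_compl_iff, mem_closedBall, not_le, dist_eq_norm]
      have h1 : y' - y = (k - 1) • (y - c) := by
        rw [hy', sub_smul, one_smul]
        abel
      have hrepr : y + t • (y' - y) - c = (1 + t * (k - 1)) • (y - c) := by
        rw [h1, smul_smul, add_smul, one_smul]
        abel
      rw [hrepr, norm_smul, Real.norm_eq_abs, ← dist_eq_norm]
      have hcoef : 1 + t * (k - 1) = (1 - t) + t * k := by ring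
      have hpos : (0:ℝ) < (1 - t) + t * k := by
        rcases eq_or_lt_of_le ht1 with h | h
        · subst h
          simpa using hkpos
        · have h2 : 0 < 1 - t := by linarith
          have h3 : 0 ≤ t * k := mul_nonneg ht0 hkpos.le
          linarith
      rw [hcoef, abs_of_pos hpos]
      have hexp : ((1 - t) + t * k) * dist y c = (1 - t) * dist y c + t * (r + 1) := by
        rw [hk]
        field_simp
      rw [hexp]
      rcases eq_or_lt_of_le ht0 with h | h
      · rw [← h]
        norm_num
        linarith
      · have h2 : (1 - t) * r ≤ (1 - t) * dist y c :=
          mul_le_mul_of_nonneg_left hy.le (by linarith)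
        nlinarith
    have hjy : JoinedIn (closedBall c r)ᶜ y y' := by
      have hconv : Convex ℝ (segment ℝ y y') := convex_segment y y'
      have hpc := hconv.isPathConnected ⟨y, left_mem_segment ℝ y y'⟩
      exact (hpc.joinedIn y (left_mem_segment ℝ y y') y' (right_mem_segment ℝ y y')).mono hseg
    exact ⟨hjy, hy's⟩
  refine ⟨b, hbc, ?_⟩
  intro y hy
  obtain ⟨hjy, hy's⟩ := hjoin y hy
  have hsphjoin : JoinedIn (closedBall c r)ᶜ (c + ((r + 1) / dist y c) • (y - c)) b :=
    (hsph.joinedIn _ hy's b hbs).mono (sphere_subset_compl_closedBall (by linarith))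
  exact (hjy.trans hsphjoin).symm

/-! ### Line coordinates on ℂ -/

/-- Affine coordinate of `w` relative to the line through `x₀` and `z`. -/
def lc (x₀ z w : ℂ) : ℂ := (w - x₀) / (z - x₀)

lemma lc_of_smul {x₀ z : ℂ} (hne : x₀ ≠ z) (s : ℝ) :
    lc x₀ z (x₀ + s • (z - x₀)) = (s : ℂ) := by
  have hd : z - x₀ ≠ 0 := sub_ne_zero.2 (Ne.symm hne)
  rw [lc, add_sub_cancel_left, Complex.real_smul, mul_div_assoc, div_self hd, mul_one]

lemma eq_lc_smul {x₀ z : ℂ} (hne : x₀ ≠ z) (w : ℂ) :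
    w = x₀ + (lc x₀ z w) * (z - x₀) := by
  have hd : z - x₀ ≠ 0 := sub_ne_zero.2 (Ne.symm hne)
  rw [lc, div_mul_cancel₀ _ hd]
  ring

lemma lc_dist {x₀ z : ℂ} (hne : x₀ ≠ z) (w u : ℂ) :
    ‖lc x₀ z w - lc x₀ z u‖ = ‖w - u‖ / ‖z - x₀‖ := by
  have hd : z - x₀ ≠ 0 := sub_ne_zero.2 (Ne.symm hne)
  rw [lc, lc, div_sub_div_same, norm_div]
  congr 1
  congr 1
  ring

lemma mem_segment_iff_lc {x₀ z : ℂ} (hne : x₀ ≠ z) {w : ℂ} :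
    w ∈ segment ℝ x₀ z ↔
      (lc x₀ z w).im = 0 ∧ 0 ≤ (lc x₀ z w).re ∧ (lc x₀ z w).re ≤ 1 := by
  rw [segment_eq_image']
  constructor
  · rintro ⟨s, ⟨hs0, hs1⟩, rfl⟩
    rw [lc_of_smul hne]
    exact ⟨Complex.ofReal_im s, by simpa using hs0, by simpa using hs1⟩
  · rintro ⟨him, hre0, hre1⟩
    refine ⟨(lc x₀ z w).re, ⟨hre0, hre1⟩, ?_⟩
    have h1 : ((lc x₀ z w).re : ℂ) = lc x₀ z w := by
      rw [Complex.ext_iff]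
      simp [him]
    show x₀ + (lc x₀ z w).re • (z - x₀) = w
    rw [Complex.real_smul, h1]
    exact (eq_lc_smul hne w).symm

lemma lc_combo {x₀ z : ℂ} (u v : ℂ) {a b : ℝ} (hab : a + b = 1) :
    lc x₀ z (a • u + b • v) = a • lc x₀ z u + b • lc x₀ z v := by
  have hab' : (a:ℂ) + (b:ℂ) = 1 := by exact_mod_cast hab
  unfold lc
  simp only [Complex.real_smul]
  rw [mul_div_assoc', mul_div_assoc', ← add_div]
  congr 1
  linear_combination x₀ * hab'

lemma phi_combo {x₀ z : ℂ} (u v : ℂ) {a b : ℝ} (hab : a + b = 1) :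
    (lc x₀ z (a • u + b • v)).im = a * (lc x₀ z u).im + b * (lc x₀ z v).im := by
  rw [lc_combo u v hab, Complex.add_im, Complex.smul_im, Complex.smul_im]
  rfl

lemma convex_phiPos (x₀ z : ℂ) : Convex ℝ {w : ℂ | 0 < (lc x₀ z w).im} := by
  intro u hu v hv a b ha hb hab
  simp only [mem_setOf_eq] at hu hv ⊢
  rw [phi_combo u v hab]
  rcases ha.lt_or_eq with h | h
  · have : 0 ≤ b * (lc x₀ z v).im := mul_nonneg hb hv.le
    have h2 : 0 < a * (lc x₀ z u).im := mul_pos h hu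
    linarith
  · rw [← h] at hab ⊢
    simp only [zero_mul, zero_add] at hab ⊢
    rw [hab] at *
    simpa using hv

lemma convex_phiNeg (x₀ z : ℂ) : Convex ℝ {w : ℂ | (lc x₀ z w).im < 0} := by
  intro u hu v hv a b ha hb hab
  simp only [mem_setOf_eq] at hu hv ⊢
  rw [phi_combo u v hab]
  rcases ha.lt_or_eq with h | h
  · have : b * (lc x₀ z v).im ≤ 0 := mul_nonpos_of_nonneg_of_nonpos hb hv.le
    have h2 : a * (lc x₀ z u).im < 0 := mul_neg_of_pos_of_neg h hu
    linarith
  · rw [← h] at hab ⊢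
    simp only [zero_mul, zero_add] at hab ⊢
    rw [hab] at *
    simpa using hv

lemma isCompact_segment (a b : ℂ) : IsCompact (segment ℝ a b) := by
  rw [segment_eq_image']
  exact isCompact_Icc.image (by fun_prop)

/-! ### A ball around an endpoint minus the segment is preconnected -/

lemma abs_re_le_norm (w : ℂ) : |w.re| ≤ ‖w‖ := Complex.abs_re_le_norm w

lemma lc_self {x₀ z : ℂ} (hne : x₀ ≠ z) : lc x₀ z z = 1 :=
  div_self (sub_ne_zero.2 (Ne.symm hne))

lemma lc_perp {x₀ z : ℂ} (hne : x₀ ≠ z) (w : ℂ) (τ : ℝ) :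
    lc x₀ z (w + τ • (Complex.I * (z - x₀))) = lc x₀ z w + τ * Complex.I := by
  have hd : z - x₀ ≠ 0 := sub_ne_zero.2 (Ne.symm hne)
  unfold lc
  rw [Complex.real_smul]
  field_simp
  ring

lemma im_lc_perp {x₀ z : ℂ} (hne : x₀ ≠ z) (w : ℂ) (τ : ℝ) :
    (lc x₀ z (w + τ • (Complex.I * (z - x₀)))).im = (lc x₀ z w).im + τ := by
  rw [lc_perp hne]
  simp

lemma dist_perp (w : ℂ) (τ : ℝ) (d : ℂ) :
    dist (w + τ • (Complex.I * d)) w = |τ| * ‖d‖ := by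
  rw [dist_eq_norm, add_sub_cancel_left, norm_smul, Real.norm_eq_abs, norm_mul,
    Complex.norm_I, one_mul]

lemma notMem_segment_of_re_gt {x₀ z : ℂ} (hne : x₀ ≠ z) {w : ℂ}
    (h : 1 < (lc x₀ z w).re) : w ∉ segment ℝ x₀ z := by
  intro hw
  rw [mem_segment_iff_lc hne] at hw
  linarith [hw.2.2]

lemma notMem_segment_of_im_ne {x₀ z : ℂ} (hne : x₀ ≠ z) {w : ℂ}
    (h : (lc x₀ z w).im ≠ 0) : w ∉ segment ℝ x₀ z := by
  intro hw
  rw [mem_segment_iff_lc hne] at hw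
  exact h hw.1

lemma isPreconnected_ball_diff_segment {x₀ z : ℂ} (hne : x₀ ≠ z) {ζ : ℝ}
    (hζ0 : 0 < ζ) (hζ : ζ ≤ ‖z - x₀‖) :
    IsPreconnected (ball z ζ \ segment ℝ x₀ z) := by
  have hd : z - x₀ ≠ 0 := sub_ne_zero.2 (Ne.symm hne)
  have hnd : (0:ℝ) < ‖z - x₀‖ := norm_pos_iff.2 hd
  set nd := ‖z - x₀‖ with hndd
  set S := segment ℝ x₀ z with hS
  set Hp := ball z ζ ∩ {w : ℂ | 0 < (lc x₀ z w).im} with hHp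
  set Hm := ball z ζ ∩ {w : ℂ | (lc x₀ z w).im < 0} with hHm
  have hHpsub : Hp ⊆ ball z ζ \ S := fun w hw =>
    ⟨hw.1, notMem_segment_of_im_ne hne (ne_of_gt hw.2)⟩
  have hHmsub : Hm ⊆ ball z ζ \ S := fun w hw =>
    ⟨hw.1, notMem_segment_of_im_ne hne (ne_of_lt hw.2)⟩
  have hHppre : IsPreconnected Hp := ((convex_ball z ζ).inter (convex_phiPos x₀ z)).isPreconnected
  have hHmpre : IsPreconnected Hm := ((convex_ball z ζ).inter (convex_phiNeg x₀ z)).isPreconnected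
  set p := z + (ζ / (2 * nd)) • (z - x₀) with hp
  have hlcp : lc x₀ z p = ((1 + ζ / (2 * nd) : ℝ) : ℂ) := by
    have h1 : p = x₀ + (1 + ζ / (2 * nd) : ℝ) • (z - x₀) := by
      rw [hp, Complex.real_smul, Complex.real_smul]
      push_cast
      ring
    rw [h1, lc_of_smul hne]
  have hdistpz : dist p z = ζ / 2 := by
    rw [hp, dist_comm, dist_eq_norm]
    have h2 : z - (z + (ζ / (2 * nd)) • (z - x₀)) = -((ζ / (2 * nd)) • (z - x₀)) := by ring
    rw [h2, norm_neg, norm_smul, Real.norm_eq_abs, abs_of_pos (by positivity), ← hndd]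
    field_simp
  set Bp := ball p (ζ / 4) with hBp
  have hBpball : Bp ⊆ ball z ζ := by
    intro w hw
    rw [hBp, mem_ball] at hw
    rw [mem_ball]
    calc dist w z ≤ dist w p + dist p z := dist_triangle w p z
      _ < ζ / 4 + ζ / 2 := by rw [hdistpz]; linarith
      _ < ζ := by linarith
  have hBpre : ∀ w ∈ Bp, 1 < (lc x₀ z w).re := by
    intro w hw
    rw [hBp, mem_ball, dist_eq_norm] at hw
    have h1 : ‖lc x₀ z w - lc x₀ z p‖ = ‖w - p‖ / nd := lc_dist hne w p
    have h2 : |(lc x₀ z w).re - (lc x₀ z p).re| ≤ ‖w - p‖ / nd := by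
      rw [← h1]
      have h3 := abs_re_le_norm (lc x₀ z w - lc x₀ z p)
      rwa [Complex.sub_re] at h3
    have h3 : (lc x₀ z p).re = 1 + ζ / (2 * nd) := by rw [hlcp, Complex.ofReal_re]
    have h4 : ‖w - p‖ / nd < (ζ / 4) / nd := by gcongr
    have e1 : (ζ / 4) / nd = ζ / (4 * nd) := by ring
    have e2 : ζ / (2 * nd) = 2 * (ζ / (4 * nd)) := by ring
    have hq : 0 < ζ / (4 * nd) := by positivity
    rw [e1] at h4
    have h5 := (abs_lt.1 (lt_of_le_of_lt h2 h4)).1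
    rw [h3, e2] at h5
    linarith
  have hBpS : Bp ⊆ ball z ζ \ S := fun w hw =>
    ⟨hBpball hw, notMem_segment_of_re_gt hne (hBpre w hw)⟩
  have hBppre : IsPreconnected Bp := (convex_ball p (ζ/4)).isPreconnected
  -- perpendicular probe points from p
  set τ₀ := ζ / (8 * nd) with hτ₀
  have hτ₀pos : 0 < τ₀ := by positivity
  have hprobe : ∀ σ : ℝ, σ ≠ 0 → |σ| ≤ τ₀ →
      (p + σ • (Complex.I * (z - x₀))) ∈ Bp ∧
      (lc x₀ z (p + σ • (Complex.I * (z - x₀)))).im = σ := by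
    intro σ hσ hσle
    constructor
    · rw [hBp, mem_ball, dist_perp, ← hndd]
      calc |σ| * nd ≤ τ₀ * nd := by gcongr
        _ = ζ / 8 := by rw [hτ₀]; field_simp
        _ < ζ / 4 := by linarith
    · rw [im_lc_perp hne, hlcp, Complex.ofReal_im, zero_add]
  have hqp_mem : (p + τ₀ • (Complex.I * (z - x₀))) ∈ Bp ∩ {w : ℂ | 0 < (lc x₀ z w).im} := by
    obtain ⟨h1, h2⟩ := hprobe τ₀ hτ₀pos.ne' (le_of_eq (abs_of_pos hτ₀pos))
    exact ⟨h1, by rw [mem_setOf_eq, h2]; exact hτ₀pos⟩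
  have hqm_mem : (p + (-τ₀) • (Complex.I * (z - x₀))) ∈ Bp ∩ {w : ℂ | (lc x₀ z w).im < 0} := by
    obtain ⟨h1, h2⟩ := hprobe (-τ₀) (by simpa using hτ₀pos.ne') (by rw [abs_neg, abs_of_pos hτ₀pos])
    exact ⟨h1, by rw [mem_setOf_eq, h2]; linarith⟩
  have hHpne : (Bp ∩ Hp).Nonempty :=
    ⟨_, hqp_mem.1, hBpball hqp_mem.1, hqp_mem.2⟩
  have hHmne : (Bp ∩ Hm).Nonempty :=
    ⟨_, hqm_mem.1, hBpball hqm_mem.1, hqm_mem.2⟩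
  -- the core set
  set Core := Hm ∪ (Bp ∪ Hp) with hCore
  have hCorepre : IsPreconnected Core := by
    have h1 : IsPreconnected (Bp ∪ Hp) :=
      IsPreconnected.union' hHpne hBppre hHppre
    exact IsPreconnected.union' (hHmne.mono (fun w hw => ⟨hw.2, Or.inl hw.1⟩)) hHmpre h1
  have hCoresub : Core ⊆ ball z ζ \ S :=
    union_subset hHmsub (union_subset hBpS hHpsub)
  -- pieces for each point
  have hTx : ∀ x ∈ ball z ζ \ S, ∃ T, T ⊆ ball z ζ \ S ∧ x ∈ T ∧ Hp ⊆ T ∧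
      IsPreconnected T := by
    intro x hx
    obtain ⟨hxball, hxS⟩ := hx
    rcases lt_trichotomy ((lc x₀ z x).im) 0 with him | him | him
    · exact ⟨Core, hCoresub, Or.inl ⟨hxball, him⟩, fun w hw => Or.inr (Or.inr hw), hCorepre⟩
    · -- on the line: x has re > 1
      have hrex : 1 < (lc x₀ z x).re := by
        have h1 : ‖lc x₀ z x - lc x₀ z z‖ = ‖x - z‖ / nd := lc_dist hne x z
        have h2 : ‖x - z‖ / nd < ζ / nd := by
          gcongr
          rw [← dist_eq_norm]
          exact hxball
        have h3 : ζ / nd ≤ 1 := by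
          rw [div_le_one hnd]
          exact hζ
        have h4 : |(lc x₀ z x).re - 1| < 1 := by
          have h5 := abs_re_le_norm (lc x₀ z x - lc x₀ z z)
          rw [Complex.sub_re, lc_self hne, Complex.one_re] at h5
          rw [lc_self hne] at h1
          rw [h1] at h5
          linarith
        have h6 : 0 < (lc x₀ z x).re := by
          have := (abs_lt.1 h4).1
          linarith
        by_contra hle
        push_neg at hle
        exact hxS ((mem_segment_iff_lc hne).2 ⟨him, h6.le, hle⟩)
      set ρx := min (ζ - dist x z) (((lc x₀ z x).re - 1) * nd) with hρx
      have hρxpos : 0 < ρx := by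
        rw [hρx]
        apply lt_min
        · rw [mem_ball] at hxball
          linarith
        · have : 0 < (lc x₀ z x).re - 1 := by linarith
          positivity
      set Bx := ball x ρx with hBx
      have hBxball : Bx ⊆ ball z ζ := by
        intro w hw
        rw [hBx, mem_ball] at hw
        rw [mem_ball]
        calc dist w z ≤ dist w x + dist x z := dist_triangle w x z
          _ < ρx + dist x z := by linarith
          _ ≤ (ζ - dist x z) + dist x z := by
              have := min_le_left (ζ - dist x z) (((lc x₀ z x).re - 1) * nd)
              rw [hρx]
              linarith [this]
          _ = ζ := by ring
      have hBxS : Bx ⊆ ball z ζ \ S := by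
        intro w hw
        refine ⟨hBxball hw, ?_⟩
        apply notMem_segment_of_re_gt hne
        rw [hBx, mem_ball, dist_eq_norm] at hw
        have h1 : ‖lc x₀ z w - lc x₀ z x‖ = ‖w - x‖ / nd := lc_dist hne w x
        have h2 : |(lc x₀ z w).re - (lc x₀ z x).re| ≤ ‖w - x‖ / nd := by
          rw [← h1]
          have h3 := abs_re_le_norm (lc x₀ z w - lc x₀ z x)
          rwa [Complex.sub_re] at h3
        have h4 : ‖w - x‖ / nd < ρx / nd := by gcongr
        have h5 : ρx / nd ≤ ((lc x₀ z x).re - 1) := by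
          rw [div_le_iff₀ hnd]
          calc ρx ≤ ((lc x₀ z x).re - 1) * nd :=
            min_le_right (ζ - dist x z) (((lc x₀ z x).re - 1) * nd)
            _ = ((lc x₀ z x).re - 1) * nd := rfl
        have h6 := (abs_lt.1 (lt_of_le_of_lt h2 (lt_of_lt_of_le h4 h5))).1
        linarith
      -- probe from x
      set σx := ρx / (2 * nd) with hσx
      have hσxpos : 0 < σx := by positivity
      have hxprobe : (x + σx • (Complex.I * (z - x₀))) ∈ Bx ∩ Hp := by
        have hdist : dist (x + σx • (Complex.I * (z - x₀))) x = σx * nd := by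
          rw [dist_perp, abs_of_pos hσxpos, ← hndd]
        have hmemBx : (x + σx • (Complex.I * (z - x₀))) ∈ Bx := by
          rw [hBx, mem_ball, hdist, hσx]
          calc ρx / (2 * nd) * nd = ρx / 2 := by field_simp
            _ < ρx := by linarith
        refine ⟨hmemBx, hBxball hmemBx, ?_⟩
        rw [mem_setOf_eq, im_lc_perp hne, him, zero_add]
        exact hσxpos
      refine ⟨Bx ∪ Hp, union_subset hBxS hHpsub, Or.inl (mem_ball_self hρxpos),
        fun w hw => Or.inr hw, ?_⟩
      exact IsPreconnected.union' ⟨_, hxprobe.1, hxprobe.2⟩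
        ((convex_ball x ρx).isPreconnected) hHppre
    · exact ⟨Hp, hHpsub, ⟨hxball, him⟩, Subset.rfl, hHppre⟩
  apply isPreconnected_of_forall_pair
  intro x hx y hy
  obtain ⟨Tx, hTxsub, hxTx, hHpTx, hTxpre⟩ := hTx x hx
  obtain ⟨Ty, hTysub, hyTy, hHpTy, hTypre⟩ := hTx y hy
  refine ⟨Tx ∪ Ty, union_subset hTxsub hTysub, Or.inl hxTx, Or.inr hyTy, ?_⟩
  have hHpne' : Hp.Nonempty := ⟨_, hBpball hqp_mem.1, hqp_mem.2⟩
  exact IsPreconnected.union' ⟨hHpne'.some, hHpTx hHpne'.some_mem, hHpTy hHpne'.some_mem⟩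
    hTxpre hTypre

/-! ### The whisker lemma: attaching a segment at a single boundary point of a
closed set with connected complement keeps the complement connected. -/

lemma lc_base (x₀ z : ℂ) : lc x₀ z x₀ = 0 := by simp [lc]

theorem whisker {F : Set ℂ} (hF : IsClosed F) (hFc : IsConnected Fᶜ)
    {x₀ z : ℂ} (hne : x₀ ≠ z) (hzF : z ∉ F)
    (hSF : segment ℝ x₀ z ∩ F = {x₀}) :
    IsConnected (F ∪ segment ℝ x₀ z)ᶜ := by
  have hd : z - x₀ ≠ 0 := sub_ne_zero.2 (Ne.symm hne)
  have hnd : (0:ℝ) < ‖z - x₀‖ := norm_pos_iff.2 hd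
  set nd := ‖z - x₀‖ with hndd
  set S := segment ℝ x₀ z with hS
  set W := (F ∪ S)ᶜ with hW
  have hWo : IsOpen W := by
    rw [hW]
    exact (hF.union (isCompact_segment x₀ z).isClosed).isOpen_compl
  have hx₀F : x₀ ∈ F := by
    have h1 : x₀ ∈ S ∩ F := by rw [hSF]; rfl
    exact h1.2
  have hFne : F.Nonempty := ⟨x₀, hx₀F⟩
  have hζpos : 0 < infDist z F := (hF.notMem_iff_infDist_pos hFne).1 hzF
  set ζ := infDist z F / 2 with hζ
  have hζ0 : 0 < ζ := by positivity
  have hζnd : ζ ≤ nd := by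
    have h1 : infDist z F ≤ dist z x₀ := infDist_le_dist_of_mem hx₀F
    rw [dist_eq_norm] at h1
    have h2 : ‖z - x₀‖ = nd := rfl
    rw [hζ]
    linarith
  have hballF : ∀ w ∈ ball z ζ, w ∉ F := by
    intro w hw hwF
    have h1 : infDist z F ≤ dist z w := infDist_le_dist_of_mem hwF
    rw [mem_ball, dist_comm] at hw
    linarith
  set X₀ := ball z ζ \ S with hX₀
  have hX₀W : X₀ ⊆ W := by
    rintro w ⟨hwb, hwS⟩
    rw [hW, mem_compl_iff, mem_union]
    push_neg
    exact ⟨hballF w hwb, hwS⟩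
  have hX₀pre : IsPreconnected X₀ := isPreconnected_ball_diff_segment hne hζ0 hζnd
  have hX₀ne : X₀.Nonempty := by
    set σ := ζ / (2 * nd) with hσ
    have hσ0 : 0 < σ := by positivity
    refine ⟨z + σ • (Complex.I * (z - x₀)), ?_, ?_⟩
    · rw [mem_ball, dist_perp, abs_of_pos hσ0, hσ, ← hndd]
      calc ζ / (2 * nd) * nd = ζ / 2 := by field_simp
        _ < ζ := by linarith
    · apply notMem_segment_of_im_ne hne
      rw [im_lc_perp hne, lc_self hne, Complex.one_im, zero_add]
      exact hσ0.ne'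
  -- the strips: any point of W near S \ {x₀} connects to X₀ inside W
  have hstrip : ∀ s ∈ S, s ≠ x₀ → ∃ ε > 0, ∀ w ∈ ball s ε, w ∈ W →
      ∃ T : Set ℂ, IsPreconnected T ∧ T ⊆ W ∧ w ∈ T ∧ (T ∩ X₀).Nonempty := by
    intro s hs hsx₀
    by_cases hsz : s = z
    · subst hsz
      refine ⟨ζ, hζ0, fun w hwb hwW => ⟨X₀, hX₀pre, hX₀W, ⟨hwb, ?_⟩, ?_⟩⟩
      · intro hwS
        rw [hW, mem_compl_iff, mem_union] at hwW
        push_neg at hwW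
        exact hwW.2 hwS
      · obtain ⟨x, hx⟩ := hX₀ne
        exact ⟨x, hx, hx⟩
    · -- s interior to the segment
      have hmem := (mem_segment_iff_lc hne).1 hs
      obtain ⟨him, hre0, hre1⟩ := hmem
      set θ := (lc x₀ z s).re with hθ
      have hlcs : lc x₀ z s = (θ : ℂ) := by
        rw [Complex.ext_iff]
        exact ⟨rfl, by rw [Complex.ofReal_im]; exact him⟩
      have hθ0 : 0 < θ := by
        rcases hre0.lt_or_eq with h | h
        · exact h
        · exfalso
          apply hsx₀
          have h1 := eq_lc_smul hne s
          rw [hlcs, ← h, Complex.ofReal_zero, zero_mul, add_zero] at h1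
          exact h1
      have hθ1 : θ < 1 := by
        rcases hre1.lt_or_eq with h | h
        · exact h
        · exfalso
          apply hsz
          have h1 := eq_lc_smul hne s
          rw [hlcs, h, Complex.ofReal_one, one_mul] at h1
          rw [h1]
          ring
      set Stail := segment ℝ s z with hStail
      have htailsub : Stail ⊆ S := (convex_segment x₀ z).segment_subset hs (right_mem_segment ℝ x₀ z)
      have htailF : ∀ u ∈ Stail, u ∉ F := by
        intro u hu huF
        have h1 : u ∈ S ∩ F := ⟨htailsub hu, huF⟩
        rw [hSF] at h1
        obtain ⟨a, b, ha, hb, hab, habu⟩ := hu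
        have h2 : lc x₀ z u = a • lc x₀ z s + b • lc x₀ z z := by
          rw [← habu]
          exact lc_combo s z hab
        rw [h1, lc_base, hlcs, lc_self hne] at h2
        have h3 : (0:ℝ) = a * θ + b := by
          have h4 := congrArg Complex.re h2
          simpa using h4
        have h5 : 0 ≤ a * θ := mul_nonneg ha hθ0.le
        have hb0 : b = 0 := by linarith
        have ha1 : a = 1 := by rw [hb0] at hab; linarith
        have h6 : a * θ = 0 := by linarith
        rw [ha1, one_mul] at h6
        linarith
      obtain ⟨g, hg0, hgsub⟩ := (isCompact_segment s z).exists_thickening_subset_open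
        hF.isOpen_compl htailF
      set ε := min (g / 2) (min (θ * nd / 2) ((1 - θ) * nd / 2)) with hε
      have hε0 : 0 < ε := by
        rw [hε]
        apply lt_min (by linarith)
        apply lt_min
        · positivity
        · have : 0 < 1 - θ := by linarith
          positivity
      refine ⟨ε, hε0, fun w hwb hwW => ?_⟩
      have hwS : w ∉ S := by
        rw [hW, mem_compl_iff, mem_union] at hwW
        push_neg at hwW
        exact hwW.2
      -- w is off the line
      have hwim : (lc x₀ z w).im ≠ 0 := by
        intro him'
        apply hwS
        rw [mem_ball, dist_eq_norm] at hwb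
        have h1 : ‖lc x₀ z w - lc x₀ z s‖ = ‖w - s‖ / nd := lc_dist hne w s
        have h2 : |(lc x₀ z w).re - θ| ≤ ‖w - s‖ / nd := by
          have h3 := abs_re_le_norm (lc x₀ z w - lc x₀ z s)
          rw [Complex.sub_re, ← hθ, h1] at h3
          exact h3
        have h4 : ‖w - s‖ / nd < ε / nd := by gcongr
        have h5 : ε / nd ≤ θ / 2 := by
          rw [div_le_iff₀ hnd]
          calc ε ≤ θ * nd / 2 := (min_le_right _ _).trans (min_le_left _ _)
            _ = θ / 2 * nd := by ring
        have h6 : ε / nd ≤ (1 - θ) / 2 := by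
          rw [div_le_iff₀ hnd]
          calc ε ≤ (1 - θ) * nd / 2 := (min_le_right _ _).trans (min_le_right _ _)
            _ = (1 - θ) / 2 * nd := by ring
        have h7 := abs_lt.1 (lt_of_le_of_lt h2 h4)
        rw [mem_segment_iff_lc hne]
        refine ⟨him', by nlinarith [h7.1], by nlinarith [h7.2]⟩
      -- probe points near z
      set σ := min (g / 2) ζ / (2 * nd) with hσ
      have hσ0 : 0 < σ := by
        rw [hσ]
        have : 0 < min (g / 2) ζ := lt_min (by linarith) hζ0
        positivity
      have hprobe : ∀ sg : ℝ, sg ≠ 0 → |sg| = σ →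
          (z + sg • (Complex.I * (z - x₀))) ∈ thickening (g / 2) Stail ∩ X₀ ∧
          (lc x₀ z (z + sg • (Complex.I * (z - x₀)))).im = sg := by
        intro sg hsg hsga
        have hdz : dist (z + sg • (Complex.I * (z - x₀))) z = σ * nd := by
          rw [dist_perp, hsga, hndd]
        have hσnd : σ * nd < min (g / 2) ζ := by
          rw [hσ]
          have h1 : 0 < min (g / 2) ζ := lt_min (by linarith) hζ0
          calc min (g / 2) ζ / (2 * nd) * nd = min (g / 2) ζ / 2 := by field_simp
            _ < min (g / 2) ζ := by linarith
        have him' : (lc x₀ z (z + sg • (Complex.I * (z - x₀)))).im = sg := by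
          rw [im_lc_perp hne, lc_self hne, Complex.one_im, zero_add]
        refine ⟨⟨?_, ?_, ?_⟩, him'⟩
        · rw [mem_thickening_iff]
          exact ⟨z, right_mem_segment ℝ s z, by
            rw [hdz]; exact lt_of_lt_of_le hσnd (min_le_left _ _)⟩
        · rw [mem_ball, hdz]
          exact lt_of_lt_of_le hσnd (min_le_right _ _)
        · exact notMem_segment_of_im_ne hne (by rw [him']; exact hsg)
      -- the two strips
      rcases lt_or_gt_of_ne hwim with hwneg | hwpos
      · set T := (thickening (g / 2) Stail ∩ {w : ℂ | (lc x₀ z w).im < 0}) ∪ X₀ with hT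
        obtain ⟨hq, hqim⟩ := hprobe (-σ) (by simpa using hσ0.ne') (by rw [abs_neg, abs_of_pos hσ0])
        have hTsub : T ⊆ W := by
          apply union_subset _ hX₀W
          rintro u ⟨huthick, huim⟩
          rw [hW, mem_compl_iff, mem_union]
          push_neg
          constructor
          · have h1 : u ∈ thickening g Stail :=
              thickening_mono (by linarith) Stail huthick
            exact fun huF => (hgsub h1) huF
          · exact notMem_segment_of_im_ne hne (ne_of_lt huim)
        have hwT : w ∈ T := by
          left
          constructor
          · rw [mem_thickening_iff]
            refine ⟨s, left_mem_segment ℝ s z, ?_⟩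
            rw [mem_ball] at hwb
            calc dist w s < ε := hwb
              _ ≤ g / 2 := by rw [hε]; exact min_le_left _ _
          · exact hwneg
        refine ⟨T, ?_, hTsub, hwT, ?_⟩
        · apply IsPreconnected.union'
          · exact ⟨_, ⟨hq.1, by rw [mem_setOf_eq, hqim]; linarith⟩, hq.2⟩
          · exact ((Convex.thickening (convex_segment s z) _).inter
              (convex_phiNeg x₀ z)).isPreconnected
          · exact hX₀pre
        · obtain ⟨x, hx⟩ := hX₀ne
          exact ⟨x, Or.inr hx, hx⟩
      · set T := (thickening (g / 2) Stail ∩ {w : ℂ | 0 < (lc x₀ z w).im}) ∪ X₀ with hT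
        obtain ⟨hq, hqim⟩ := hprobe σ hσ0.ne' (abs_of_pos hσ0)
        have hTsub : T ⊆ W := by
          apply union_subset _ hX₀W
          rintro u ⟨huthick, huim⟩
          rw [hW, mem_compl_iff, mem_union]
          push_neg
          constructor
          · have h1 : u ∈ thickening g Stail :=
              thickening_mono (by linarith) Stail huthick
            exact fun huF => (hgsub h1) huF
          · exact notMem_segment_of_im_ne hne (ne_of_gt huim)
        have hwT : w ∈ T := by
          left
          constructor
          · rw [mem_thickening_iff]
            refine ⟨s, left_mem_segment ℝ s z, ?_⟩
            rw [mem_ball] at hwb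
            calc dist w s < ε := hwb
              _ ≤ g / 2 := by rw [hε]; exact min_le_left _ _
          · exact hwpos
        refine ⟨T, ?_, hTsub, hwT, ?_⟩
        · apply IsPreconnected.union'
          · exact ⟨_, ⟨hq.1, by rw [mem_setOf_eq, hqim]; exact hσ0⟩, hq.2⟩
          · exact ((Convex.thickening (convex_segment s z) _).inter
              (convex_phiPos x₀ z)).isPreconnected
          · exact hX₀pre
        · obtain ⟨x, hx⟩ := hX₀ne
          exact ⟨x, Or.inr hx, hx⟩
  -- main connectivity argument
  constructor
  · obtain ⟨x, hx⟩ := hX₀ne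
    exact ⟨x, hX₀W hx⟩
  · have claim : ∀ u v : Set ℂ, IsOpen u → IsOpen v → W ⊆ u ∪ v →
        W ∩ (u ∩ v) = ∅ → X₀ ⊆ u → (W ∩ v).Nonempty → False := by
      intro u v hu hv hcov hemp hX₀u hWv
      set Q := W ∩ v with hQ
      have hQo : IsOpen Q := hWo.inter hv
      have hQW : Q ⊆ W := inter_subset_left
      have hQu : ∀ q ∈ Q, q ∉ u := by
        rintro q ⟨hqW, hqv⟩ hqu
        have : q ∈ W ∩ (u ∩ v) := ⟨hqW, hqu, hqv⟩
        rw [hemp] at this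
        exact this
      -- Q avoids neighborhoods of S \ {x₀}
      have hSavoid : ∀ s ∈ S, s ≠ x₀ → ∃ ε > 0, ∀ w ∈ ball s ε, w ∉ Q := by
        intro s hs hsx
        obtain ⟨ε, hε0, hT⟩ := hstrip s hs hsx
        refine ⟨ε, hε0, ?_⟩
        rintro w hwball ⟨hwW, hwv⟩
        obtain ⟨T, hTpre, hTW, hwT, ⟨xT, hxTT, hxTX⟩⟩ := hT w hwball hwW
        obtain ⟨y, hyT, hyu, hyv⟩ := hTpre u v hu hv (fun y hy => hcov (hTW hy))
          ⟨xT, hxTT, hX₀u hxTX⟩ ⟨w, hwT, hwv⟩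
        have : y ∈ W ∩ (u ∩ v) := ⟨hTW hyT, hyu, hyv⟩
        rw [hemp] at this
        exact this
      -- closure of Q within Fᶜ is Q
      have hclQ : ∀ y, y ∈ closure Q → y ∉ F → y ∈ Q := by
        intro y hycl hyF
        by_cases hyS : y ∈ S
        · exfalso
          have hyx₀ : y ≠ x₀ := fun h => hyF (h ▸ hx₀F)
          obtain ⟨ε, hε0, hεQ⟩ := hSavoid y hyS hyx₀
          obtain ⟨w, hwQ, hwd⟩ := Metric.mem_closure_iff.1 hycl ε hε0
          exact hεQ w (by rw [mem_ball, dist_comm]; exact hwd) hwQ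
        · have hyW : y ∈ W := by
            rw [hW, mem_compl_iff, mem_union]
            push_neg
            exact ⟨hyF, hyS⟩
          rcases hcov hyW with hyu | hyv
          · exfalso
            obtain ⟨w, hwu, hwQ⟩ := mem_closure_iff.1 hycl u hu hyu
            exact hQu w hwQ hwu
          · exact ⟨hyW, hyv⟩
      obtain ⟨hFcne, hFcpre⟩ := hFc
      have hWFc : W ⊆ Fᶜ := by
        intro w hw
        rw [hW, mem_compl_iff, mem_union] at hw
        push_neg at hw
        exact hw.1
      obtain ⟨q, hqQ⟩ := hWv
      obtain ⟨x, hxX⟩ := hX₀ne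
      have hxWu : x ∈ W ∩ u := ⟨hX₀W hxX, hX₀u hxX⟩
      have hxcl : x ∉ closure Q := by
        intro hxcl
        obtain ⟨w, hwu, hwQ⟩ := mem_closure_iff.1 hxcl u hu hxWu.2
        exact hQu w hwQ hwu
      have hcov2 : Fᶜ ⊆ Q ∪ (closure Q)ᶜ := by
        intro y hy
        by_cases hycl : y ∈ closure Q
        · exact Or.inl (hclQ y hycl hy)
        · exact Or.inr hycl
      obtain ⟨y, _, hyQ, hycl⟩ := hFcpre Q (closure Q)ᶜ hQo isClosed_closure.isOpen_compl
        hcov2 ⟨q, hWFc hqQ.1, hqQ⟩ ⟨x, hWFc hxWu.1, hxcl⟩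
      exact hycl (subset_closure hyQ)
    intro u v hu hv hcov hWu hWv
    by_contra hWuv
    rw [not_nonempty_iff_eq_empty] at hWuv
    have hX₀side : X₀ ⊆ u ∨ X₀ ⊆ v := by
      by_contra hns
      push_neg at hns
      obtain ⟨a, haX, hau⟩ := not_subset.1 hns.1
      obtain ⟨b, hbX, hbv⟩ := not_subset.1 hns.2
      have hain : a ∈ v := by
        rcases hcov (hX₀W haX) with h | h
        · exact absurd h hau
        · exact h
      have hbin : b ∈ u := by
        rcases hcov (hX₀W hbX) with h | h
        · exact h
        · exact absurd h hbv
      obtain ⟨y, hyX, hyu, hyv⟩ := hX₀pre u v hu hv (fun w hw => hcov (hX₀W hw))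
        ⟨b, hbX, hbin⟩ ⟨a, haX, hain⟩
      have : y ∈ W ∩ (u ∩ v) := ⟨hX₀W hyX, hyu, hyv⟩
      rw [hWuv] at this
      exact this
    rcases hX₀side with h | h
    · exact claim u v hu hv hcov hWuv h hWv
    · exact claim v u hv hu (by rwa [union_comm]) (by rwa [inter_comm v u]) h hWu

end KissingPath

open KissingPath in
/-- Existence of a kissing path with respect to two distinct circularly
accessible type I boundary points of `K`. -/
theorem exists_kissing_path (K : Set ℂ) (hK : IsCompact K)
    (hKc : IsConnected Kᶜ) (hint : (interior K).Nonempty)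
    (z₁ z₂ : ℂ) (hne : z₁ ≠ z₂)
    (hz₁ : z₁ ∈ frontier K) (hz₂ : z₂ ∈ frontier K)
    (hz₁I : ∀ U : Set ℂ, IsOpen U → z₁ ∈ U → (U ∩ interior K).Nonempty)
    (hz₂I : ∀ U : Set ℂ, IsOpen U → z₂ ∈ U → (U ∩ interior K).Nonempty)
    (hca₁ : ∃ c : ℂ, ∃ r : ℝ, 0 < r ∧ Metric.closedBall c r ∩ K = {z₁})
    (hca₂ : ∃ c : ℂ, ∃ r : ℝ, 0 < r ∧ Metric.closedBall c r ∩ K = {z₂}) :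
    ∃ Γ : ℂ → ℂ, ContinuousOn Γ (Metric.sphere (0 : ℂ) 1) ∧
      Set.InjOn Γ (Metric.sphere (0 : ℂ) 1) ∧
      z₁ ∈ Γ '' Metric.sphere (0 : ℂ) 1 ∧
      z₂ ∈ Γ '' Metric.sphere (0 : ℂ) 1 ∧
      (Γ '' Metric.sphere (0 : ℂ) 1) ∩ K = {z₁, z₂} ∧
      (∀ x ∈ (Γ '' Metric.sphere (0 : ℂ) 1)ᶜ,
        Bornology.IsBounded (connectedComponentIn (Γ '' Metric.sphere (0 : ℂ) 1)ᶜ x) →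
        Disjoint (connectedComponentIn (Γ '' Metric.sphere (0 : ℂ) 1)ᶜ x) K) := by
  classical
  obtain ⟨c₁, r₁, hr₁, hB₁⟩ := hca₁
  obtain ⟨c₂, r₂, hr₂, hB₂⟩ := hca₂
  have hKcl : IsClosed K := hK.isClosed
  have hz₁K : z₁ ∈ K := hKcl.frontier_subset hz₁
  have hz₂K : z₂ ∈ K := hKcl.frontier_subset hz₂
  have hz₁B : z₁ ∈ Metric.closedBall c₁ r₁ := by
    have h1 : z₁ ∈ Metric.closedBall c₁ r₁ ∩ K := by rw [hB₁]; rfl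
    exact h1.1
  have hz₂B : z₂ ∈ Metric.closedBall c₂ r₂ := by
    have h1 : z₂ ∈ Metric.closedBall c₂ r₂ ∩ K := by rw [hB₂]; rfl
    exact h1.1
  -- the kissing points are on the spheres
  have hz₁s : dist z₁ c₁ = r₁ := by
    by_contra h
    have hlt : dist z₁ c₁ < r₁ := lt_of_le_of_ne (Metric.mem_closedBall.1 hz₁B) h
    obtain ⟨p, hpb, hpint⟩ := hz₁I (Metric.ball c₁ r₁) Metric.isOpen_ball (Metric.mem_ball.2 hlt)
    have hpz : p ∈ ({z₁} : Set ℂ) := by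
      rw [← hB₁]
      exact ⟨Metric.ball_subset_closedBall hpb, interior_subset hpint⟩
    rw [mem_singleton_iff] at hpz
    rw [hpz] at hpint
    rw [frontier, mem_diff] at hz₁
    exact (hz₁.2 hpint).elim
  have hz₂s : dist z₂ c₂ = r₂ := by
    by_contra h
    have hlt : dist z₂ c₂ < r₂ := lt_of_le_of_ne (Metric.mem_closedBall.1 hz₂B) h
    obtain ⟨p, hpb, hpint⟩ := hz₂I (Metric.ball c₂ r₂) Metric.isOpen_ball (Metric.mem_ball.2 hlt)
    have hpz : p ∈ ({z₂} : Set ℂ) := by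
      rw [← hB₂]
      exact ⟨Metric.ball_subset_closedBall hpb, interior_subset hpint⟩
    rw [mem_singleton_iff] at hpz
    rw [hpz] at hpint
    rw [frontier, mem_diff] at hz₂
    exact (hz₂.2 hpint).elim
  have hc₂K : c₂ ∉ K := by
    intro h
    have h1 : c₂ ∈ ({z₂} : Set ℂ) := by
      rw [← hB₂]
      exact ⟨Metric.mem_closedBall_self hr₂.le, h⟩
    rw [mem_singleton_iff] at h1
    rw [← h1] at hz₂s
    rw [dist_self] at hz₂s
    linarith
  -- the "opposite pole" of the first ball
  set p₀ : ℂ := c₁ - (z₁ - c₁) with hp₀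
  have hp₀s : dist p₀ c₁ = r₁ := by
    rw [hp₀, dist_eq_norm]
    have h1 : c₁ - (z₁ - c₁) - c₁ = -(z₁ - c₁) := by ring
    rw [h1, norm_neg, ← dist_eq_norm]
    exact hz₁s
  have hp₀K : p₀ ∉ K := by
    intro h
    have h1 : p₀ ∈ ({z₁} : Set ℂ) := by
      rw [← hB₁]
      exact ⟨Metric.mem_closedBall.2 hp₀s.le, h⟩
    rw [mem_singleton_iff] at h1
    have h2 : z₁ = c₁ := by
      have h5 := h1
      rw [hp₀] at h5
      have h3 : (2:ℂ) * z₁ = 2 * c₁ := by linear_combination -h5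
      exact mul_left_cancel₀ (two_ne_zero (α := ℂ)) h3
    rw [h2, dist_self] at hz₁s
    linarith
  -- homogeneity: drag p₀ to c₂ inside Kᶜ
  have hKco : IsOpen Kᶜ := hKcl.isOpen_compl
  obtain ⟨Ψ, Q, hQc, hQU, hQfix, hΨp₀⟩ :=
    exists_supported_homeo hKco hKc.isPreconnected (hp₀K : p₀ ∈ Kᶜ) (hc₂K : c₂ ∈ Kᶜ)
  have hΨfixK : ∀ k ∈ K, Ψ k = k := fun k hk => hQfix k (fun hq => (hQU hq) hk)
  have hΨsymmfixK : ∀ k ∈ K, Ψ.symm k = k :=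
    fun k hk => homeo_symm_fix hQfix k (fun hq => (hQU hq) hk)
  set M := Ψ '' Metric.closedBall c₁ r₁ with hM
  have hMcpt : IsCompact M := (isCompact_closedBall c₁ r₁).image Ψ.continuous
  have hMK : M ∩ K = {z₁} := by
    apply Subset.antisymm
    · rintro k ⟨⟨b, hb, rfl⟩, hkK⟩
      have h1 : Ψ.symm (Ψ b) = Ψ b := hΨsymmfixK _ hkK
      rw [Ψ.symm_apply_apply] at h1
      have h2 : Ψ b ∈ Metric.closedBall c₁ r₁ ∩ K := ⟨h1 ▸ hb, hkK⟩
      rw [hB₁] at h2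
      exact h2
    · rintro k hk
      rw [mem_singleton_iff] at hk
      rw [hk]
      exact ⟨⟨z₁, hz₁B, hΨfixK z₁ hz₁K⟩, hz₁K⟩
  have hz₂M : z₂ ∉ M := by
    intro h
    have h1 : z₂ ∈ M ∩ K := ⟨h, hz₂K⟩
    rw [hMK, mem_singleton_iff] at h1
    exact hne h1.symm
  have hMcompl : Mᶜ = Ψ '' (Metric.closedBall c₁ r₁)ᶜ := by
    apply Subset.antisymm
    · intro w hw
      exact ⟨Ψ.symm w, fun hmem => hw ⟨Ψ.symm w, hmem, Ψ.apply_symm_apply w⟩,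
        Ψ.apply_symm_apply w⟩
    · rintro _ ⟨y, hy, rfl⟩ ⟨b, hb, hbe⟩
      exact hy (Ψ.injective hbe ▸ hb)
  have hMcconn : IsConnected Mᶜ := by
    rw [hMcompl]
    exact ((isPathConnected_compl_closedBall c₁ hr₁).isConnected).image _
      Ψ.continuous.continuousOn
  -- the last contact point x₀ of M along the radius [c₂, z₂]
  set dir2 := z₂ - c₂ with hdir2
  have hnd2 : ‖dir2‖ = r₂ := by rw [hdir2, ← dist_eq_norm]; exact hz₂s
  have hd2 : dir2 ≠ 0 := by
    intro h
    rw [h, norm_zero] at hnd2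
    linarith
  set Tset := {t : ℝ | t ∈ Icc (0:ℝ) 1 ∧ c₂ + t • dir2 ∈ M} with hTset
  have hc₂M : c₂ ∈ M := by
    rw [hM, ← hΨp₀]
    exact ⟨p₀, Metric.mem_closedBall.2 hp₀s.le, rfl⟩
  have h0T : (0:ℝ) ∈ Tset := by
    refine ⟨⟨le_refl 0, zero_le_one⟩, ?_⟩
    rw [zero_smul, add_zero]
    exact hc₂M
  have hTc : IsCompact Tset := by
    have h1 : Tset = Icc 0 1 ∩ (fun t : ℝ => c₂ + t • dir2) ⁻¹' M := rfl
    rw [h1]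
    exact isCompact_Icc.inter_right (hMcpt.isClosed.preimage (by fun_prop))
  set t₀ := sSup Tset with ht₀
  have ht₀mem : t₀ ∈ Tset := hTc.sSup_mem ⟨0, h0T⟩
  have ht₀max : ∀ t ∈ Tset, t ≤ t₀ := fun t ht => le_csSup hTc.bddAbove ht
  set x₀ := c₂ + t₀ • dir2 with hx₀
  have hx₀M : x₀ ∈ M := ht₀mem.2
  have ht₀0 : 0 ≤ t₀ := ht₀mem.1.1
  have ht₀le1 : t₀ ≤ 1 := ht₀mem.1.2
  have ht₀1 : t₀ < 1 := by
    rcases ht₀le1.lt_or_eq with h | h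
    · exact h
    · exfalso
      apply hz₂M
      have h1 : x₀ = z₂ := by
        rw [hx₀, h, one_smul, hdir2]
        ring
      rw [← h1]
      exact hx₀M
  have hx₀z₂ : x₀ ≠ z₂ := by
    intro h
    exact hz₂M (h ▸ hx₀M)
  set a := z₂ - x₀ with ha
  have haa : a = (1 - t₀) • dir2 := by
    rw [ha, hx₀, hdir2, sub_smul, one_smul]
    ring
  have ha0 : a ≠ 0 := sub_ne_zero.2 (Ne.symm hx₀z₂)
  have hρ : (0:ℝ) < ‖a‖ := norm_pos_iff.2 ha0
  have hna : ‖a‖ = (1 - t₀) * r₂ := by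
    rw [haa, norm_smul, Real.norm_eq_abs, abs_of_pos (by linarith), hnd2]
  have hz₂xa : x₀ + a = z₂ := by rw [ha]; ring
  -- points beyond x₀ on the radius are not in M
  have hbeyond : ∀ t : ℝ, t₀ < t → t ≤ 1 → c₂ + t • dir2 ∉ M := by
    intro t h1 h2 hmem
    have h3 : t ∈ Tset := ⟨⟨le_trans ht₀0 h1.le, h2⟩, hmem⟩
    exact absurd (ht₀max t h3) (not_le.2 h1)
  -- the segment from x₀ to z₂ meets M only at x₀
  have hSM : segment ℝ x₀ z₂ ∩ M = {x₀} := by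
    apply Subset.antisymm
    · rintro u ⟨huS, huM⟩
      rw [← hz₂xa, segment_mem_iff] at huS
      obtain ⟨s, hs0, hs1, rfl⟩ := huS
      rcases hs0.lt_or_eq with h | h
      · exfalso
        have h1 : x₀ + s • a = c₂ + (t₀ + s * (1 - t₀)) • dir2 := by
          rw [hx₀, haa, smul_smul, add_smul]
          ring
        rw [h1] at huM
        refine hbeyond (t₀ + s * (1 - t₀)) ?_ ?_ huM
        · have : 0 < s * (1 - t₀) := mul_pos h (by linarith)
          linarith
        · nlinarith
      · rw [← h, zero_smul, add_zero]
        rfl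
    · rintro u hu
      rw [mem_singleton_iff] at hu
      subst hu
      exact ⟨left_mem_segment ℝ x₀ z₂, hx₀M⟩
  -- the pinch ball is inside the second kissing ball
  have hdistx₀ : dist x₀ c₂ = t₀ * r₂ := by
    rw [hx₀, dist_eq_norm, add_sub_cancel_left, norm_smul, Real.norm_eq_abs,
      abs_of_nonneg ht₀0, hnd2]
  have hBstar : Metric.closedBall x₀ ‖a‖ ⊆ Metric.closedBall c₂ r₂ := by
    intro w hw
    rw [Metric.mem_closedBall] at hw ⊢
    calc dist w c₂ ≤ dist w x₀ + dist x₀ c₂ := dist_triangle w x₀ c₂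
      _ ≤ ‖a‖ + t₀ * r₂ := by rw [hdistx₀]; linarith
      _ = r₂ := by rw [hna]; ring
  have hBstarK : Metric.closedBall x₀ ‖a‖ ∩ K = {z₂} := by
    apply Subset.antisymm
    · intro w hw
      rw [← hB₂]
      exact ⟨hBstar hw.1, hw.2⟩
    · intro w hw
      rw [mem_singleton_iff] at hw
      subst hw
      refine ⟨Metric.mem_closedBall.2 ?_, hz₂K⟩
      rw [dist_eq_norm, ← ha]
  have hz₁Bstar : ‖a‖ ≤ ‖z₁ - x₀‖ := by
    by_contra h
    push_neg at h
    have h1 : z₁ ∈ Metric.closedBall x₀ ‖a‖ ∩ K :=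
      ⟨Metric.mem_closedBall.2 (by rw [dist_eq_norm]; linarith), hz₁K⟩
    rw [hBstarK, mem_singleton_iff] at h1
    exact hne h1
  -- x₀ is on the image of the sphere
  have hx₀pre : Ψ.symm x₀ ∈ Metric.sphere c₁ r₁ := by
    obtain ⟨b, hb, hbe⟩ := hx₀M
    have hbx : b = Ψ.symm x₀ := by rw [← hbe, Ψ.symm_apply_apply]
    rw [← hbx, Metric.mem_sphere]
    by_contra hlt
    have hblt : dist b c₁ < r₁ := lt_of_le_of_ne (Metric.mem_closedBall.1 hb) hlt
    have hop : IsOpen (Ψ '' Metric.ball c₁ r₁) := Ψ.isOpenMap _ Metric.isOpen_ball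
    have hx₀o : x₀ ∈ Ψ '' Metric.ball c₁ r₁ := ⟨b, Metric.mem_ball.2 hblt, hbe⟩
    obtain ⟨ε, hε0, hball⟩ := Metric.isOpen_iff.1 hop x₀ hx₀o
    set τ := min (ε / (2 * ‖a‖)) 1 with hτ
    have hτ0 : 0 < τ := lt_min (by positivity) one_pos
    have hτ1 : τ ≤ 1 := min_le_right _ _
    have hτa : τ * ‖a‖ < ε := by
      calc τ * ‖a‖ ≤ (ε / (2 * ‖a‖)) * ‖a‖ := by
            gcongr
            exact min_le_left _ _
        _ = ε / 2 := by
            have hane : ‖a‖ ≠ 0 := hρ.ne'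
            rw [div_mul_eq_mul_div, mul_comm (2:ℝ) ‖a‖, mul_comm ε ‖a‖]
            exact mul_div_mul_left ε 2 hane
        _ < ε := by linarith
    have hw0 : x₀ + τ • a ∈ Ψ '' Metric.ball c₁ r₁ := by
      apply hball
      rw [Metric.mem_ball, dist_eq_norm, add_sub_cancel_left, norm_smul, Real.norm_eq_abs,
        abs_of_pos hτ0]
      exact hτa
    have hw : x₀ + τ • a ∈ M := image_mono (f := Ψ) Metric.ball_subset_closedBall hw0
    have h1 : x₀ + τ • a = c₂ + (t₀ + τ * (1 - t₀)) • dir2 := by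
      rw [hx₀, haa, smul_smul, add_smul]
      ring
    rw [h1] at hw
    refine hbeyond _ ?_ ?_ hw
    · have h2 : 0 < τ * (1 - t₀) := mul_pos hτ0 (by linarith)
      linarith
    · nlinarith
  -- the kissing curve
  set Λ := dragFun x₀ ‖a‖ a with hΛ
  set A : ℂ → ℂ := fun w => c₁ + (r₁ : ℝ) • w with hAd
  set Γ : ℂ → ℂ := fun w => Λ (Ψ (A w)) with hΓ
  set E := Ψ '' Metric.sphere c₁ r₁ with hE
  have hAsphere : A '' Metric.sphere (0:ℂ) 1 = Metric.sphere c₁ r₁ := by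
    apply Subset.antisymm
    · rintro _ ⟨w, hw, rfl⟩
      rw [Metric.mem_sphere, dist_eq_norm] at hw ⊢
      rw [sub_zero] at hw
      show ‖c₁ + (r₁:ℝ) • w - c₁‖ = r₁
      rw [add_sub_cancel_left, norm_smul, Real.norm_eq_abs, abs_of_pos hr₁, hw, mul_one]
    · intro u hu
      rw [Metric.mem_sphere, dist_eq_norm] at hu
      refine ⟨(r₁⁻¹ : ℝ) • (u - c₁), ?_, ?_⟩
      · rw [Metric.mem_sphere, dist_eq_norm, sub_zero, norm_smul, Real.norm_eq_abs,
          abs_of_pos (by positivity), hu]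
        field_simp
      · show c₁ + (r₁:ℝ) • ((r₁⁻¹:ℝ) • (u - c₁)) = u
        rw [smul_smul, mul_inv_cancel₀ hr₁.ne', one_smul]
        ring
  have himg : Γ '' Metric.sphere (0:ℂ) 1 = Λ '' E := by
    rw [hE, ← hAsphere, Set.image_image, Set.image_image]
  have hEM : E ⊆ M := image_mono (f := Ψ) Metric.sphere_subset_closedBall
  have hz₁E : z₁ ∈ E := ⟨z₁, Metric.mem_sphere.2 hz₁s, hΨfixK z₁ hz₁K⟩
  have hx₀E : x₀ ∈ E := ⟨Ψ.symm x₀, hx₀pre, Ψ.apply_symm_apply x₀⟩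
  have hΛz₁ : Λ z₁ = z₁ := dragFun_apply_of_le x₀ hρ a hz₁Bstar
  have hΛx₀ : Λ x₀ = z₂ := by
    rw [hΛ, dragFun_apply_center x₀ hρ a, hz₂xa]
  have hΓcont : Continuous Γ := by
    rw [hΓ]
    exact (dragFun_continuous x₀ ‖a‖ a).comp (Ψ.continuous.comp (by fun_prop))
  have hinj : Set.InjOn Γ (Metric.sphere (0:ℂ) 1) := by
    intro w hw w' hw' heq
    have h1 : Ψ (A w) ∈ E := by
      apply mem_image_of_mem Ψ
      rw [← hAsphere]
      exact mem_image_of_mem A hw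
    have h2 : Ψ (A w') ∈ E := by
      apply mem_image_of_mem Ψ
      rw [← hAsphere]
      exact mem_image_of_mem A hw'
    have key : Ψ (A w) = Ψ (A w') := by
      rcases pinch_collision ha0 heq with h | ⟨hS1, hS2⟩
      · exact h
      · rw [hz₂xa] at hS1 hS2
        have h5 : Ψ (A w) ∈ ({x₀} : Set ℂ) := by
          rw [← hSM]
          exact ⟨hS1, hEM h1⟩
        have h6 : Ψ (A w') ∈ ({x₀} : Set ℂ) := by
          rw [← hSM]
          exact ⟨hS2, hEM h2⟩
        rw [mem_singleton_iff] at h5 h6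
        rw [h5, h6]
    have h3 : A w = A w' := Ψ.injective key
    have h4 : (r₁:ℝ) • w = (r₁:ℝ) • w' := by
      have h7 : c₁ + (r₁:ℝ) • w = c₁ + (r₁:ℝ) • w' := h3
      exact add_left_cancel h7
    exact smul_right_injective ℂ hr₁.ne' h4
  have hz₁img : z₁ ∈ Γ '' Metric.sphere (0:ℂ) 1 := by
    rw [himg]
    exact ⟨z₁, hz₁E, hΛz₁⟩
  have hz₂img : z₂ ∈ Γ '' Metric.sphere (0:ℂ) 1 := by
    rw [himg]
    exact ⟨x₀, hx₀E, hΛx₀⟩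
  have hpinchK : ∀ e ∈ M, Λ e ∈ K → Λ e = z₁ ∨ Λ e = z₂ := by
    intro e heM hkK
    rcases le_or_gt ‖a‖ ‖e - x₀‖ with h | h
    · have h1 : Λ e = e := dragFun_apply_of_le x₀ hρ a h
      left
      have h2 : e ∈ M ∩ K := ⟨heM, by rwa [h1] at hkK⟩
      rw [hMK, mem_singleton_iff] at h2
      rw [h1, h2]
    · right
      have h1 : Λ e ∈ Metric.closedBall x₀ ‖a‖ := by
        apply dragFun_mem_closedBall hρ (le_refl ‖a‖)
        rw [Metric.mem_closedBall, dist_eq_norm]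
        exact h.le
      have h2 : Λ e ∈ Metric.closedBall x₀ ‖a‖ ∩ K := ⟨h1, hkK⟩
      rw [hBstarK, mem_singleton_iff] at h2
      exact h2
  have himgK : (Γ '' Metric.sphere (0:ℂ) 1) ∩ K = {z₁, z₂} := by
    apply Subset.antisymm
    · rintro k ⟨hkimg, hkK⟩
      rw [himg] at hkimg
      obtain ⟨e, heE, rfl⟩ := hkimg
      rcases hpinchK e (hEM heE) hkK with h | h
      · exact Or.inl h
      · exact Or.inr h
    · rintro k hk
      rcases hk with h | h
      · rw [h]
        exact ⟨hz₁img, hz₁K⟩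
      · rw [mem_singleton_iff] at h
        rw [h]
        exact ⟨hz₂img, hz₂K⟩
  refine ⟨Γ, hΓcont.continuousOn, hinj, hz₁img, hz₂img, himgK, ?_⟩
  -- the filled curve
  set N := Λ '' M with hN
  have hNcpt : IsCompact N := hMcpt.image (dragFun_continuous _ _ _)
  have hz₁N : z₁ ∈ N := ⟨z₁, ⟨z₁, hz₁B, hΨfixK z₁ hz₁K⟩, hΛz₁⟩
  have hz₂N : z₂ ∈ N := ⟨x₀, hx₀M, hΛx₀⟩
  have hNK : N ∩ K = {z₁, z₂} := by
    apply Subset.antisymm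
    · rintro k ⟨hkN, hkK⟩
      obtain ⟨e, heM, rfl⟩ := hkN
      rcases hpinchK e heM hkK with h | h
      · exact Or.inl h
      · exact Or.inr h
    · rintro k hk
      rcases hk with h | h
      · rw [h]; exact ⟨hz₁N, hz₁K⟩
      · rw [mem_singleton_iff] at h
        rw [h]; exact ⟨hz₂N, hz₂K⟩
  have himgN : Γ '' Metric.sphere (0:ℂ) 1 ⊆ N := by
    rw [himg, hN]
    exact image_mono (f := Λ) hEM
  have hNcomplEq : Nᶜ = Λ '' ((M ∪ segment ℝ x₀ z₂)ᶜ) := by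
    apply Subset.antisymm
    · intro w hw
      obtain ⟨y, hy⟩ := dragFun_surjective hρ (le_refl ‖a‖) w
      refine ⟨y, ?_, hy⟩
      rw [mem_compl_iff, mem_union]
      push_neg
      constructor
      · intro hyM
        exact hw ⟨y, hyM, hy⟩
      · intro hyS
        apply hw
        have h1 : Λ y = z₂ := by
          rw [hΛ, ← hz₂xa]
          exact pinch_apply_segment ha0 (by rwa [hz₂xa])
        refine ⟨x₀, hx₀M, ?_⟩
        rw [hΛx₀, ← h1]
        exact hy
    · rintro _ ⟨y, hy, rfl⟩
      rw [mem_compl_iff, mem_union] at hy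
      push_neg at hy
      rintro ⟨m, hmM, hme⟩
      rcases pinch_collision ha0 hme with h | ⟨hS1, hS2⟩
      · exact hy.1 (h ▸ hmM)
      · rw [hz₂xa] at hS2
        exact hy.2 hS2
  have hNcconn : IsConnected Nᶜ := by
    rw [hNcomplEq]
    exact (whisker hMcpt.isClosed hMcconn hx₀z₂ hz₂M hSM).image _
      (dragFun_continuous _ _ _).continuousOn
  have hNcunb : ¬ Bornology.IsBounded Nᶜ := by
    intro hb
    obtain ⟨R, hR⟩ := hNcpt.isBounded.subset_closedBall 0
    obtain ⟨R', hR'⟩ := hb.subset_closedBall 0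
    have hR0 : 0 ≤ R := by
      have h1 := hR hz₁N
      rw [Metric.mem_closedBall] at h1
      exact le_trans dist_nonneg h1
    set ptt : ℂ := ((max R R' + 1 : ℝ) : ℂ) with hptt
    have hn : dist ptt 0 = max R R' + 1 := by
      rw [hptt, dist_eq_norm, sub_zero, Complex.norm_real, Real.norm_eq_abs]
      rw [abs_of_pos]
      have := le_max_left R R'
      linarith
    rcases em (ptt ∈ N) with h | h
    · have h1 := hR h
      rw [Metric.mem_closedBall, hn] at h1
      have := le_max_left R R'
      linarith
    · have h1 := hR' h
      rw [Metric.mem_closedBall, hn] at h1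
      have := le_max_right R R'
      linarith
  intro x hx hbdd
  rw [Set.disjoint_right]
  intro k hkK hkC
  have hkimg : k ∈ (Γ '' Metric.sphere (0:ℂ) 1)ᶜ :=
    connectedComponentIn_subset _ _ hkC
  rcases em (∃ y, y ∈ connectedComponentIn (Γ '' Metric.sphere (0:ℂ) 1)ᶜ x ∧ y ∈ Nᶜ)
    with ⟨y, hyC, hyN⟩ | hCN
  · have h1 : Nᶜ ⊆ connectedComponentIn (Γ '' Metric.sphere (0:ℂ) 1)ᶜ y :=
      hNcconn.isPreconnected.subset_connectedComponentIn hyN (compl_subset_compl.2 himgN)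
    have h2 := connectedComponentIn_eq hyC
    rw [h2] at hbdd
    exact hNcunb (hbdd.subset h1)
  · push_neg at hCN
    have h3 : k ∈ N := by
      by_contra h4
      exact (hCN k hkC) h4
    have h5 : k ∈ N ∩ K := ⟨h3, hkK⟩
    rw [hNK] at h5
    rcases h5 with h | h
    · exact hkimg (by rw [h]; exact hz₁img)
    · rw [mem_singleton_iff] at h
      exact hkimg (by rw [h]; exact hz₂img)
end
end

section
/- Let K be a compact subset of ℂ with ℂ \ K connected and with nonempty interior, and let z₁ and z₂ be two distinct points of ∂K, each of which is a type I boundary point and circularly accessible. Then there exists f ∈ A(K) such that: sup_{z ∈ K} |f(z)| = 1; f is injective on K (hence a homeomorphism of K onto its image) and injective holomorphic on the interior of K; f(z₁) = 1 and f(z₂) = −1; and f(K \ {z₁, z₂}) is contained in the open unit disk {w ∈ ℂ : |w| < 1}. -/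
open Complex Metric Set

lemma slit_of_close {w : ℂ} (h : ‖w - 1‖ < 1) : w ∈ Complex.slitPlane := by
  rw [Complex.mem_slitPlane_iff]
  left
  have h1 : |(w - 1).re| ≤ ‖w - 1‖ := Complex.abs_re_le_norm _
  have h2 : (w - 1).re = w.re - 1 := by simp
  have := abs_le.mp h1
  nlinarith [this.1, this.2]

/-- On a compact set with connected complement, `z - a` has a continuous
logarithm for every `a` outside `K`. -/
lemma exists_branch_log (K : Set ℂ) (hK : IsCompact K) (hKc : IsConnected Kᶜ)
    (hKne : K.Nonempty) {a : ℂ} (ha : a ∉ K) :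
    ∃ g : ℂ → ℂ, ContinuousOn g K ∧ DifferentiableOn ℂ g (interior K) ∧
      ∀ z ∈ K, Complex.exp (g z) = z - a := by
  classical
  set P : ℂ → Prop := fun b =>
    ∃ g : ℂ → ℂ, ContinuousOn g K ∧ DifferentiableOn ℂ g (interior K) ∧
      ∀ z ∈ K, Complex.exp (g z) = z - b with hP
  have hdistpos : ∀ b : ℂ, b ∉ K → 0 < infDist b K := fun b hb =>
    (hK.isClosed.notMem_iff_infDist_pos hKne).1 hb
  have hdist_le : ∀ (b : ℂ) (z : ℂ), z ∈ K → infDist b K ≤ dist b z := fun b z hz =>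
    infDist_le_dist_of_mem hz
  -- transfer of the property along small steps
  have trans : ∀ b ∉ K, P b → ∀ b' : ℂ, dist b' b < infDist b K → P b' := by
    rintro b hb ⟨g, hgc, hgd, hge⟩ b' hb'
    have hzbne : ∀ z ∈ K, z - b ≠ 0 := fun z hz => sub_ne_zero.2 (fun h => hb (h ▸ hz))
    have hslit : ∀ z ∈ K, (z - b') / (z - b) ∈ Complex.slitPlane := by
      intro z hz
      apply slit_of_close
      have hzb : (0:ℝ) < ‖z - b‖ := by
        simpa [norm_pos_iff] using hzbne z hz
      have h1 : (z - b') / (z - b) - 1 = (b - b') / (z - b) := by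
        rw [div_sub_one (hzbne z hz)]
        ring_nf
      rw [h1, norm_div, div_lt_one hzb]
      calc ‖b - b'‖ = dist b' b := by rw [dist_comm, dist_eq_norm]
        _ < infDist b K := hb'
        _ ≤ dist b z := hdist_le b z hz
        _ = ‖z - b‖ := by rw [dist_comm, dist_eq_norm]
    refine ⟨fun z => g z + Complex.log ((z - b') / (z - b)), ?_, ?_, ?_⟩
    · intro z hz
      refine (hgc z hz).add ?_
      refine ContinuousWithinAt.clog ?_ (hslit z hz)
      exact ((continuousWithinAt_id.sub continuousWithinAt_const).div
        (continuousWithinAt_id.sub continuousWithinAt_const) (hzbne z hz))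
    · intro z hz
      have hzK : z ∈ K := interior_subset hz
      refine (hgd z hz).add ?_
      refine DifferentiableWithinAt.clog ?_ (hslit z hzK)
      exact ((differentiableWithinAt_id.sub (differentiableWithinAt_const _)).div
        (differentiableWithinAt_id.sub (differentiableWithinAt_const _)) (hzbne z hzK))
    · intro z hz
      have hne0 : (z - b') / (z - b) ≠ 0 := Complex.slitPlane_ne_zero (hslit z hz)
      rw [Complex.exp_add, hge z hz, Complex.exp_log hne0]
      rw [mul_div_assoc']
      rw [mul_comm]
      rw [mul_div_assoc]
      rw [div_self (hzbne z hz), mul_one]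
  -- the two clopen sets
  set u : Set ℂ := {b | b ∉ K ∧ P b} with hu
  set v : Set ℂ := {b | b ∉ K ∧ ¬ P b} with hv
  have hu_open : IsOpen u := by
    rw [Metric.isOpen_iff]
    rintro b ⟨hbK, hbP⟩
    refine ⟨infDist b K, hdistpos b hbK, ?_⟩
    intro b' hb'
    rw [mem_ball] at hb'
    have hb'K : b' ∉ K := by
      intro h
      exact absurd (hdist_le b b' h) (not_le.2 (by rwa [dist_comm] at hb'))
    exact ⟨hb'K, trans b hbK hbP b' hb'⟩
  have hv_open : IsOpen v := by
    rw [Metric.isOpen_iff]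
    rintro b ⟨hbK, hbP⟩
    refine ⟨infDist b K / 2, by linarith [hdistpos b hbK], ?_⟩
    intro b' hb'
    rw [mem_ball] at hb'
    have hd := hdistpos b hbK
    have hb'K : b' ∉ K := by
      intro h
      have := hdist_le b b' h
      rw [dist_comm] at hb'
      linarith
    refine ⟨hb'K, fun hPb' => hbP ?_⟩
    have hstep : dist b b' < infDist b' K := by
      have h1 : infDist b K ≤ infDist b' K + dist b b' := infDist_le_infDist_add_dist
      have hsymm : dist b b' = dist b' b := dist_comm _ _
      linarith
    exact trans b' hb'K hPb' b hstep
  -- base point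
  obtain ⟨R, hR⟩ := hK.isBounded.subset_closedBall 0
  have hR0 : 0 ≤ R := by
    obtain ⟨z, hz⟩ := hKne
    have := hR hz
    rw [mem_closedBall] at this
    exact le_trans dist_nonneg this
  have hre : ∀ z ∈ K, (0:ℝ) < (z - -(R+1)).re := by
    intro z hz
    have h2 : |z.re| ≤ R := by
      have := hR hz
      rw [mem_closedBall, Complex.dist_eq, sub_zero] at this
      exact le_trans (Complex.abs_re_le_norm z) this
    have h3 := abs_le.mp h2
    simp only [Complex.sub_re, Complex.neg_re, Complex.add_re, Complex.ofReal_re,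
      Complex.one_re]
    linarith [h3.1]
  have hbaseK : (-(R+1) : ℂ) ∉ K := by
    intro h
    have := hre _ h
    simp at this
  have hbase : P (-(R + 1)) := by
    have hslit : ∀ z ∈ K, z - -(R+1) ∈ Complex.slitPlane := fun z hz =>
      Complex.mem_slitPlane_iff.mpr (Or.inl (hre z hz))
    refine ⟨fun z => Complex.log (z - -(R+1)), ?_, ?_, ?_⟩
    · intro z hz
      exact ContinuousWithinAt.clog
        (continuousWithinAt_id.sub continuousWithinAt_const) (hslit z hz)
    · intro z hz
      exact DifferentiableWithinAt.clog
        (differentiableWithinAt_id.sub (differentiableWithinAt_const _))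
        (hslit z (interior_subset hz))
    · intro z hz
      exact Complex.exp_log (Complex.slitPlane_ne_zero (hslit z hz))
  -- connectivity argument
  have hsub : Kᶜ ⊆ u ∪ v := by
    intro b hb
    by_cases h : P b
    · exact Or.inl ⟨hb, h⟩
    · exact Or.inr ⟨hb, h⟩
  have hdisj : Disjoint u v := by
    rw [Set.disjoint_left]
    rintro b ⟨_, hbP⟩ ⟨_, hbP'⟩
    exact hbP' hbP
  have hne' : (Kᶜ ∩ u).Nonempty := by
    refine ⟨-(R+1), hbaseK, hbaseK, hbase⟩
  have := hKc.isPreconnected.subset_left_of_subset_union hu_open hv_open hdisj hsub hne'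
  exact (this ha).2


open Filter Topology

set_option maxHeartbeats 4000000 in
/-- Existence of a norm-one conformal homeomorphism in `A(K)` mapping `z₁` to
`1`, `z₂` to `-1`, and the rest of `K` into the open unit disk. -/
theorem exists_conformal_homeomorphism_pm_one (K : Set ℂ) (hK : IsCompact K)
    (hKc : IsConnected Kᶜ) (hint : (interior K).Nonempty)
    (z₁ z₂ : ℂ) (hne : z₁ ≠ z₂)
    (hz₁ : z₁ ∈ frontier K) (hz₂ : z₂ ∈ frontier K)
    (hz₁I : ∀ U : Set ℂ, IsOpen U → z₁ ∈ U → (U ∩ interior K).Nonempty)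
    (hz₂I : ∀ U : Set ℂ, IsOpen U → z₂ ∈ U → (U ∩ interior K).Nonempty)
    (hca₁ : ∃ c : ℂ, ∃ r : ℝ, 0 < r ∧ Metric.closedBall c r ∩ K = {z₁})
    (hca₂ : ∃ c : ℂ, ∃ r : ℝ, 0 < r ∧ Metric.closedBall c r ∩ K = {z₂}) :
    ∃ f : ℂ → ℂ, ContinuousOn f K ∧ DifferentiableOn ℂ f (interior K) ∧
      sSup ((fun w => ‖f w‖) '' K) = 1 ∧
      Set.InjOn f K ∧
      f z₁ = 1 ∧ f z₂ = -1 ∧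
      f '' (K \ {z₁, z₂}) ⊆ Metric.ball (0 : ℂ) 1 := by
  classical
  have hKcl : IsClosed K := hK.isClosed
  have hz1K : z₁ ∈ K := hKcl.frontier_subset hz₁
  have hz2K : z₂ ∈ K := hKcl.frontier_subset hz₂
  have hKne : K.Nonempty := ⟨z₁, hz1K⟩
  -- tangent disks
  have tangent : ∀ w : ℂ, w ∈ frontier K →
      (∀ U : Set ℂ, IsOpen U → w ∈ U → (U ∩ interior K).Nonempty) →
      (∃ c : ℂ, ∃ r : ℝ, 0 < r ∧  Metric.closedBall c r ∩ K = {w}) →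
      ∃ c : ℂ, ∃ ρ : ℝ, 0 < ρ ∧ dist w c = ρ ∧ c ∉ K ∧
        ∀ z ∈ K, z ≠ w → ρ < dist z c := by
    rintro w hwf hwI ⟨c, r, hr, hcr⟩
    have hwmem : w ∈ Metric.closedBall c r ∩ K := by rw [hcr]; exact rfl
    have hd_le : dist w c ≤ r := Metric.mem_closedBall.1 hwmem.1
    have hd_eq : dist w c = r := by
      by_contra h
      have hlt : dist w c < r := lt_of_le_of_ne hd_le h
      obtain ⟨p, hpU, hpint⟩ := hwI (Metric.ball c r) Metric.isOpen_ball
        (Metric.mem_ball.2 hlt)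
      have hp : p ∈ Metric.closedBall c r ∩ K :=
        ⟨Metric.ball_subset_closedBall hpU, interior_subset hpint⟩
      rw [hcr] at hp
      rw [Set.mem_singleton_iff] at hp
      rw [hp] at hpint
      exact hwf.2 hpint
    refine ⟨w + (c - w)/2, r/2, by linarith, ?_, ?_, ?_⟩
    · rw [dist_eq_norm]
      have : w - (w + (c - w)/2) = -((c - w)/2) := by ring
      rw [this, norm_neg, norm_div]
      rw [show ‖c - w‖ = r by rw [← hd_eq, dist_eq_norm, norm_sub_rev]]
      simp
    · -- c' ∉ K : proved after the distance estimate; do it with a helper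
      have hfar : ∀ z ∈ K, z ≠ w → r/2 < dist z (w + (c - w)/2) := by
        intro z hzK hzw
        by_contra hle
        push_neg at hle
        have hdcc : dist (w + (c - w)/2) c = r/2 := by
          rw [dist_eq_norm]
          have : w + (c - w)/2 - c = -((c - w)/2) := by ring
          rw [this, norm_neg, norm_div]
          rw [show ‖c - w‖ = r by rw [← hd_eq, dist_eq_norm, norm_sub_rev]]
          simp
        have : dist z c ≤ r := by
          calc dist z c ≤ dist z (w + (c - w)/2) + dist (w + (c - w)/2) c :=
                dist_triangle _ _ _
            _ ≤ r/2 + r/2 := by linarith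
            _ = r := by ring
        have hz : z ∈ Metric.closedBall c r ∩ K := ⟨Metric.mem_closedBall.2 this, hzK⟩
        rw [hcr, Set.mem_singleton_iff] at hz
        exact hzw hz
      intro hcK
      have hcw : w + (c - w)/2 ≠ w := by
        intro h
        have : (c - w)/2 = 0 := by
          have := h
          field_simp at this
          linear_combination this / 2
        rw [div_eq_zero_iff] at this
        rcases this with h' | h'
        · rw [sub_eq_zero] at h'
          rw [h'] at hd_eq
          simp at hd_eq
          linarith
        · norm_num at h'
      have := hfar _ hcK hcw
      simp at this
      linarith
    · intro z hzK hzw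
      by_contra hle
      push_neg at hle
      have hdcc : dist (w + (c - w)/2) c = r/2 := by
        rw [dist_eq_norm]
        have : w + (c - w)/2 - c = -((c - w)/2) := by ring
        rw [this, norm_neg, norm_div]
        rw [show ‖c - w‖ = r by rw [← hd_eq, dist_eq_norm, norm_sub_rev]]
        simp
      have : dist z c ≤ r := by
        calc dist z c ≤ dist z (w + (c - w)/2) + dist (w + (c - w)/2) c :=
              dist_triangle _ _ _
          _ ≤ r/2 + r/2 := by linarith
          _ = r := by ring
      have hz : z ∈ Metric.closedBall c r ∩ K := ⟨Metric.mem_closedBall.2 this, hzK⟩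
      rw [hcr, Set.mem_singleton_iff] at hz
      exact hzw hz
  obtain ⟨c₁, ρ₁, hρ₁, hz₁c₁, hc₁K, hfar₁⟩ := tangent z₁ hz₁ hz₁I hca₁
  obtain ⟨c₂, ρ₂, hρ₂, hz₂c₂, hc₂K, hfar₂⟩ := tangent z₂ hz₂ hz₂I hca₂
  obtain ⟨g₁, hg₁c, hg₁d, hg₁e⟩ := exists_branch_log K hK hKc hKne hc₁K
  obtain ⟨g₂, hg₂c, hg₂d, hg₂e⟩ := exists_branch_log K hK hKc hKne hc₂K
  set K' : Set ℂ := K \ {z₁, z₂} with hK'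
  have hK'mem : ∀ z, z ∈ K' ↔ z ∈ K ∧ z ≠ z₁ ∧ z ≠ z₂ := by
    intro z
    simp [hK', Set.mem_diff, Set.mem_insert_iff, not_or]
  -- the Möbius quotients
  set q₁ : ℂ → ℂ := fun z => (z - z₁)/(z - c₁) with hq₁def
  set q₂ : ℂ → ℂ := fun z => (z - z₂)/(z - c₂) with hq₂def
  have hzc₁ : ∀ z ∈ K, z ≠ c₁ := fun z hz h => hc₁K (h ▸ hz)
  have hzc₂ : ∀ z ∈ K, z ≠ c₂ := fun z hz h => hc₂K (h ▸ hz)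
  have hq₁close : ∀ z ∈ K, z ≠ z₁ → ‖q₁ z - 1‖ < 1 := by
    intro z hz hzz
    have hzcne : z - c₁ ≠ 0 := sub_ne_zero.2 (hzc₁ z hz)
    have h1 : q₁ z - 1 = (c₁ - z₁)/(z - c₁) := by
      rw [hq₁def]
      rw [div_sub_one hzcne]
      ring_nf
    rw [h1, norm_div, div_lt_one (by simpa [norm_pos_iff] using hzcne)]
    have h2 : ‖c₁ - z₁‖ = ρ₁ := by
      rw [← hz₁c₁, dist_eq_norm, norm_sub_rev]
    have h3 : ρ₁ < ‖z - c₁‖ := by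
      rw [← dist_eq_norm]
      exact hfar₁ z hz hzz
    linarith [h2 ▸ h3]
  have hq₂close : ∀ z ∈ K, z ≠ z₂ → ‖q₂ z - 1‖ < 1 := by
    intro z hz hzz
    have hzcne : z - c₂ ≠ 0 := sub_ne_zero.2 (hzc₂ z hz)
    have h1 : q₂ z - 1 = (c₂ - z₂)/(z - c₂) := by
      rw [hq₂def]
      rw [div_sub_one hzcne]
      ring_nf
    rw [h1, norm_div, div_lt_one (by simpa [norm_pos_iff] using hzcne)]
    have h2 : ‖c₂ - z₂‖ = ρ₂ := by
      rw [← hz₂c₂, dist_eq_norm, norm_sub_rev]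
    have h3 : ρ₂ < ‖z - c₂‖ := by
      rw [← dist_eq_norm]
      exact hfar₂ z hz hzz
    linarith [h2 ▸ h3]
  have hq₁slit : ∀ z ∈ K, z ≠ z₁ → q₁ z ∈ Complex.slitPlane :=
    fun z hz hzz => slit_of_close (hq₁close z hz hzz)
  have hq₂slit : ∀ z ∈ K, z ≠ z₂ → q₂ z ∈ Complex.slitPlane :=
    fun z hz hzz => slit_of_close (hq₂close z hz hzz)
  -- the global logarithm of M on K'
  set g : ℂ → ℂ := fun z => g₁ z - g₂ z + Complex.log (q₁ z) - Complex.log (q₂ z)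
    with hgdef
  set M : ℂ → ℂ := fun z => (z - z₁)/(z - z₂) with hMdef
  have hgM : ∀ z ∈ K', Complex.exp (g z) = M z := by
    intro z hz
    rw [hK'mem] at hz
    obtain ⟨hzK, hzz₁, hzz₂⟩ := hz
    have e₁ : Complex.exp (g₁ z) = z - c₁ := hg₁e z hzK
    have e₂ : Complex.exp (g₂ z) = z - c₂ := hg₂e z hzK
    have l₁ : Complex.exp (Complex.log (q₁ z)) = q₁ z :=
      Complex.exp_log (Complex.slitPlane_ne_zero (hq₁slit z hzK hzz₁))
    have l₂ : Complex.exp (Complex.log (q₂ z)) = q₂ z :=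
      Complex.exp_log (Complex.slitPlane_ne_zero (hq₂slit z hzK hzz₂))
    rw [hgdef]
    simp only [Complex.exp_sub, Complex.exp_add, e₁, e₂, l₁, l₂]
    rw [hq₁def, hq₂def, hMdef]
    have h₁ : z - c₁ ≠ 0 := sub_ne_zero.2 (hzc₁ z hzK)
    have h₂ : z - c₂ ≠ 0 := sub_ne_zero.2 (hzc₂ z hzK)
    have h₃ : z - z₂ ≠ 0 := sub_ne_zero.2 hzz₂
    field_simp
  -- continuity and differentiability of g
  have hgc : ContinuousOn g K' := by
    intro z hz
    rw [hK'mem] at hz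
    obtain ⟨hzK, hzz₁, hzz₂⟩ := hz
    have hsub : K' ⊆ K := Set.diff_subset
    have hq₁cont : ContinuousWithinAt q₁ K' z := by
      exact ((continuousWithinAt_id.sub continuousWithinAt_const).div
        (continuousWithinAt_id.sub continuousWithinAt_const)
        (sub_ne_zero.2 (hzc₁ z hzK)))
    have hq₂cont : ContinuousWithinAt q₂ K' z := by
      exact ((continuousWithinAt_id.sub continuousWithinAt_const).div
        (continuousWithinAt_id.sub continuousWithinAt_const)
        (sub_ne_zero.2 (hzc₂ z hzK)))
    refine ContinuousWithinAt.sub (ContinuousWithinAt.add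
      (ContinuousWithinAt.sub ((hg₁c z hzK).mono hsub) ((hg₂c z hzK).mono hsub))
      (hq₁cont.clog (hq₁slit z hzK hzz₁))) (hq₂cont.clog (hq₂slit z hzK hzz₂))
  have hintK' : interior K ⊆ K' := by
    intro z hz
    rw [hK'mem]
    refine ⟨interior_subset hz, ?_, ?_⟩
    · intro h; exact hz₁.2 (h ▸ hz)
    · intro h; exact hz₂.2 (h ▸ hz)
  have hgd : DifferentiableOn ℂ g (interior K) := by
    intro z hz
    have hzK' := hintK' hz
    rw [hK'mem] at hzK'
    obtain ⟨hzK, hzz₁, hzz₂⟩ := hzK'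
    have hq₁diff : DifferentiableWithinAt ℂ q₁ (interior K) z :=
      ((differentiableWithinAt_id.sub (differentiableWithinAt_const _)).div
        (differentiableWithinAt_id.sub (differentiableWithinAt_const _))
        (sub_ne_zero.2 (hzc₁ z hzK)))
    have hq₂diff : DifferentiableWithinAt ℂ q₂ (interior K) z :=
      ((differentiableWithinAt_id.sub (differentiableWithinAt_const _)).div
        (differentiableWithinAt_id.sub (differentiableWithinAt_const _))
        (sub_ne_zero.2 (hzc₂ z hzK)))
    exact (((hg₁d z hz).sub (hg₂d z hz)).add
      (hq₁diff.clog (hq₁slit z hzK hzz₁))).sub (hq₂diff.clog (hq₂slit z hzK hzz₂))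
  -- bounds on the imaginary part
  obtain ⟨B₁, hB₁⟩ := hK.exists_bound_of_continuousOn hg₁c
  obtain ⟨B₂, hB₂⟩ := hK.exists_bound_of_continuousOn hg₂c
  have hB₁0 : 0 ≤ B₁ := le_trans (norm_nonneg _) (hB₁ z₁ hz1K)
  have hB₂0 : 0 ≤ B₂ := le_trans (norm_nonneg _) (hB₂ z₁ hz1K)
  have hπ := Real.pi_gt_three
  set B : ℝ := B₁ + B₂ + 2 * Real.pi with hBdef
  have hB0 : 0 < B := by rw [hBdef]; linarith
  have him : ∀ z ∈ K', |(g z).im| ≤ B := by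
    intro z hz
    rw [hK'mem] at hz
    obtain ⟨hzK, hzz₁, hzz₂⟩ := hz
    have h1 : |(g₁ z).im| ≤ B₁ :=
      le_trans (Complex.abs_im_le_norm _) (hB₁ z hzK)
    have h2 : |(g₂ z).im| ≤ B₂ :=
      le_trans (Complex.abs_im_le_norm _) (hB₂ z hzK)
    have h3 : |(Complex.log (q₁ z)).im| ≤ Real.pi := by
      rw [Complex.log_im]; exact Complex.abs_arg_le_pi _
    have h4 : |(Complex.log (q₂ z)).im| ≤ Real.pi := by
      rw [Complex.log_im]; exact Complex.abs_arg_le_pi _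
    have e : (g z).im = (g₁ z).im - (g₂ z).im + (Complex.log (q₁ z)).im
        - (Complex.log (q₂ z)).im := by
      rw [hgdef]; simp [Complex.add_im, Complex.sub_im]
    rw [e, hBdef]
    have h1' := abs_le.mp h1
    have h2' := abs_le.mp h2
    have h3' := abs_le.mp h3
    have h4' := abs_le.mp h4
    rw [abs_le]
    constructor <;> [skip; skip] <;> nlinarith [h1'.1, h1'.2, h2'.1, h2'.2, h3'.1, h3'.2,
      h4'.1, h4'.2]
  -- the exponent
  set m : ℕ := ⌈B⌉₊ + 1 with hmdef
  have hBm : B < (m:ℝ) := by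
    have h := Nat.le_ceil B
    have : ((⌈B⌉₊ : ℝ)) < ((m:ℝ)) := by
      rw [hmdef]; push_cast; linarith
    linarith
  have hm0 : (0:ℝ) < (m:ℝ) := lt_trans hB0 hBm
  set τ : ℝ := (2 * (m:ℝ))⁻¹ with hτdef
  have hτpos : 0 < τ := by rw [hτdef]; positivity
  have hτm : τ * (2 * (m:ℝ)) = 1 := by
    rw [hτdef]; field_simp
  have hτB : τ * B < 1/2 := by
    rw [hτdef, inv_mul_eq_div, div_lt_iff₀ (by positivity)]
    nlinarith [hBm]
  set t : ℂ → ℂ := fun z => Complex.exp ((τ:ℂ) * g z) with htdef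
  have htim : ∀ z ∈ K', |((τ:ℂ) * g z).im| < 1/2 := by
    intro z hz
    rw [Complex.im_ofReal_mul, abs_mul, abs_of_pos hτpos]
    calc τ * |(g z).im| ≤ τ * B := by
          exact mul_le_mul_of_nonneg_left (him z hz) (le_of_lt hτpos)
      _ < 1/2 := hτB
  have htre : ∀ z ∈ K', 0 < (t z).re := by
    intro z hz
    rw [htdef]
    rw [Complex.exp_re]
    apply mul_pos (Real.exp_pos _)
    apply Real.cos_pos_of_mem_Ioo
    have h5 := abs_lt.mp (htim z hz)
    constructor
    · linarith [h5.1]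
    · linarith [h5.2]
  have htne : ∀ z : ℂ, t z ≠ 0 := fun z => Complex.exp_ne_zero _
  have hden : ∀ z ∈ K', (1 : ℂ) + t z ≠ 0 := by
    intro z hz h
    have h0 : (1 + t z).re = 0 := by rw [h]; simp
    rw [Complex.add_re, Complex.one_re] at h0
    linarith [htre z hz]
  have hMne : ∀ z ∈ K', M z ≠ 0 := by
    intro z hz
    rw [← hgM z hz]
    exact Complex.exp_ne_zero _
  have htnorm : ∀ z ∈ K', ‖t z‖ = ‖M z‖ ^ τ := by
    intro z hz
    rw [htdef]
    rw [Complex.norm_exp, Complex.re_ofReal_mul]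
    have h2 : Real.exp ((g z).re) = ‖M z‖ := by
      rw [← hgM z hz, Complex.norm_exp]
    have h3 : (g z).re = Real.log ‖M z‖ := by rw [← h2, Real.log_exp]
    rw [h3, Real.rpow_def_of_pos (norm_pos_iff.2 (hMne z hz)), mul_comm]
  -- the function f
  set f : ℂ → ℂ := fun z => if z = z₁ then 1 else if z = z₂ then -1
    else (1 - t z)/(1 + t z) with hfdef
  have hfK' : ∀ z ∈ K', f z = (1 - t z)/(1 + t z) := by
    intro z hz
    rw [hK'mem] at hz
    rw [hfdef]
    simp only [if_neg hz.2.1, if_neg hz.2.2]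
  have hfz₁ : f z₁ = 1 := by rw [hfdef]; simp
  have hfz₂ : f z₂ = -1 := by
    have hzz : z₂ ≠ z₁ := Ne.symm hne
    rw [hfdef]
    simp [hzz]
  have habslt : ∀ z ∈ K', ‖f z‖ < 1 := by
    intro z hz
    rw [hfK' z hz, norm_div]
    have hdenpos : 0 < ‖1 + t z‖ := by
      rw [norm_pos_iff]
      exact hden z hz
    rw [div_lt_one hdenpos]
    have hre := htre z hz
    have h1 : ‖1 - t z‖ ^ 2 < ‖1 + t z‖ ^ 2 := by
      rw [Complex.sq_norm, Complex.sq_norm, Complex.normSq_apply, Complex.normSq_apply]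
      simp only [Complex.add_re, Complex.add_im, Complex.sub_re, Complex.sub_im,
        Complex.one_re, Complex.one_im]
      nlinarith [hre]
    exact lt_of_pow_lt_pow_left₀ 2 (norm_nonneg _) h1
  have habs_le : ∀ z ∈ K, ‖f z‖ ≤ 1 := by
    intro z hz
    by_cases h1 : z = z₁
    · rw [h1, hfz₁]; simp
    by_cases h2 : z = z₂
    · rw [h2, hfz₂]; simp
    exact le_of_lt (habslt z ((hK'mem z).2 ⟨hz, h1, h2⟩))
  -- injectivity
  have hMinj : ∀ x ∈ K', ∀ y ∈ K', M x = M y → x = y := by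
    intro x hx y hy hxy
    rw [hK'mem] at hx hy
    have hx2 : x - z₂ ≠ 0 := sub_ne_zero.2 hx.2.2
    have hy2 : y - z₂ ≠ 0 := sub_ne_zero.2 hy.2.2
    rw [hMdef] at hxy
    simp only [] at hxy
    rw [div_eq_div_iff hx2 hy2] at hxy
    have h0 : (z₁ - z₂) * (x - y) = 0 := by linear_combination hxy
    rcases mul_eq_zero.1 h0 with h | h
    · exact absurd (sub_eq_zero.1 h) hne
    · exact sub_eq_zero.1 h
  have htinj : ∀ x ∈ K', ∀ y ∈ K', t x = t y → x = y := by
    intro x hx y hy hxy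
    rw [htdef] at hxy
    simp only [] at hxy
    obtain ⟨n, hn⟩ := Complex.exp_eq_exp_iff_exists_int.1 hxy
    have hnim : (((n:ℂ)) * (2 * (Real.pi:ℂ) * Complex.I)).im = (n:ℝ) * (2 * Real.pi) := by
      simp [Complex.mul_im, Complex.mul_re]
    have him' : τ * (g x).im = τ * (g y).im + (n:ℝ) * (2 * Real.pi) := by
      have := congrArg Complex.im hn
      rw [Complex.add_im, Complex.im_ofReal_mul, Complex.im_ofReal_mul, hnim] at this
      exact this
    have hn0 : n = 0 := by
      by_contra h
      have h1 : (1:ℝ) ≤ |(n:ℝ)| := by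
        rw [← Int.cast_abs]
        exact_mod_cast Int.one_le_abs h
      have h2 : |(n:ℝ) * (2 * Real.pi)| ≤ τ * B + τ * B := by
        have e : (n:ℝ) * (2 * Real.pi) = τ * (g x).im - τ * (g y).im := by linarith
        rw [e]
        have hx' := him x hx
        have hy' := him y hy
        calc |τ * (g x).im - τ * (g y).im| ≤ |τ * (g x).im| + |τ * (g y).im| :=
              abs_sub _ _
          _ ≤ τ * B + τ * B := by
              rw [abs_mul, abs_mul, abs_of_pos hτpos]
              exact add_le_add (mul_le_mul_of_nonneg_left hx' (le_of_lt hτpos))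
                (mul_le_mul_of_nonneg_left hy' (le_of_lt hτpos))
      rw [abs_mul] at h2
      have h3 : |2 * Real.pi| = 2 * Real.pi := abs_of_pos (by linarith)
      rw [h3] at h2
      nlinarith [hτB]
    rw [hn0] at hn
    simp only [Int.cast_zero, zero_mul, add_zero] at hn
    have hτne : ((τ:ℝ):ℂ) ≠ 0 := by
      exact_mod_cast ne_of_gt hτpos
    have hgg : g x = g y := mul_left_cancel₀ hτne hn
    apply hMinj x hx y hy
    rw [← hgM x hx, ← hgM y hy, hgg]
  have hinj : Set.InjOn f K := by
    intro x hx y hy hxy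
    by_cases hx1 : x = z₁ <;> by_cases hy1 : y = z₁
    · rw [hx1, hy1]
    · by_cases hy2 : y = z₂
      · rw [hx1, hfz₁, hy2, hfz₂] at hxy
        norm_num at hxy
      · have hyK' : y ∈ K' := (hK'mem y).2 ⟨hy, hy1, hy2⟩
        rw [hx1, hfz₁] at hxy
        have := habslt y hyK'
        rw [← hxy] at this
        simp at this
    · by_cases hx2 : x = z₂
      · rw [hy1, hfz₁, hx2, hfz₂] at hxy
        norm_num at hxy
      · have hxK' : x ∈ K' := (hK'mem x).2 ⟨hx, hx1, hx2⟩
        rw [hy1, hfz₁] at hxy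
        have := habslt x hxK'
        rw [hxy] at this
        simp at this
    · by_cases hx2 : x = z₂ <;> by_cases hy2 : y = z₂
      · rw [hx2, hy2]
      · have hyK' : y ∈ K' := (hK'mem y).2 ⟨hy, hy1, hy2⟩
        rw [hx2, hfz₂] at hxy
        have := habslt y hyK'
        rw [← hxy] at this
        simp at this
      · have hxK' : x ∈ K' := (hK'mem x).2 ⟨hx, hx1, hx2⟩
        rw [hy2, hfz₂] at hxy
        have := habslt x hxK'
        rw [hxy] at this
        simp at this
      · have hxK' : x ∈ K' := (hK'mem x).2 ⟨hx, hx1, hx2⟩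
        have hyK' : y ∈ K' := (hK'mem y).2 ⟨hy, hy1, hy2⟩
        apply htinj x hxK' y hyK'
        rw [hfK' x hxK', hfK' y hyK'] at hxy
        rw [div_eq_div_iff (hden x hxK') (hden y hyK')] at hxy
        linear_combination -hxy/2
  -- supremum
  have hsup : sSup ((fun w => ‖f w‖) '' K) = 1 := by
    apply IsGreatest.csSup_eq
    constructor
    · exact ⟨z₁, hz1K, by simp [hfz₁]⟩
    · rintro y ⟨w, hw, rfl⟩
      exact habs_le w hw
  -- continuity
  have htcont : ContinuousOn t K' := by
    rw [htdef]
    exact Complex.continuous_exp.comp_continuousOn (continuousOn_const.mul hgc)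
  have hratio : ContinuousOn (fun z => (1 - t z)/(1 + t z)) K' :=
    ContinuousOn.div (continuousOn_const.sub htcont) (continuousOn_const.add htcont)
      (fun z hz => hden z hz)
  have hKsub : K ⊆ K' ∪ {z₁, z₂} := by
    intro z hz
    by_cases h1 : z = z₁
    · exact Or.inr (by simp [h1])
    by_cases h2 : z = z₂
    · exact Or.inr (by simp [h2])
    · exact Or.inl ((hK'mem z).2 ⟨hz, h1, h2⟩)
  have hpair : ∀ w, w = z₁ ∨ w = z₂ → ContinuousWithinAt f {z₁, z₂} w := by
    intro w hw
    have hd : 0 < dist z₁ z₂ := dist_pos.2 hne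
    have hev : ∀ᶠ u in 𝓝[({z₁, z₂} : Set ℂ)] w, f u = f w := by
      rw [eventually_nhdsWithin_iff]
      rw [Metric.eventually_nhds_iff]
      rcases hw with h | h
      · refine ⟨dist z₁ z₂, hd, ?_⟩
        intro u hu hmem
        rcases hmem with h1 | h2
        · rw [h1, h]
        · exfalso
          rw [Set.mem_singleton_iff] at h2
          rw [h2, h] at hu
          rw [dist_comm] at hu
          exact lt_irrefl _ hu
      · refine ⟨dist z₁ z₂, hd, ?_⟩
        intro u hu hmem
        rcases hmem with h1 | h2
        · exfalso
          rw [h1, h] at hu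
          exact lt_irrefl _ hu
        · rw [Set.mem_singleton_iff] at h2
          rw [h2, h]
    exact ContinuousWithinAt.congr_of_eventuallyEq continuousWithinAt_const hev rfl
  have hfe : f =ᶠ[𝓝[K'] z₁] (fun u => (1 - t u)/(1 + t u)) := by
    filter_upwards [eventually_mem_nhdsWithin] with u hu
    exact hfK' u hu
  have hfe₂ : f =ᶠ[𝓝[K'] z₂] (fun u => (1 - t u)/(1 + t u)) := by
    filter_upwards [eventually_mem_nhdsWithin] with u hu
    exact hfK' u hu
  have ht0 : Tendsto t (𝓝[K'] z₁) (𝓝 0) := by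
    rw [tendsto_zero_iff_norm_tendsto_zero]
    have hev : (fun z => ‖t z‖) =ᶠ[𝓝[K'] z₁] (fun z => ‖M z‖ ^ τ) := by
      filter_upwards [eventually_mem_nhdsWithin] with u hu
      exact htnorm u hu
    rw [Filter.tendsto_congr' hev]
    have hMc : ContinuousWithinAt M K' z₁ := by
      apply ContinuousWithinAt.div
        (continuousWithinAt_id.sub continuousWithinAt_const)
        (continuousWithinAt_id.sub continuousWithinAt_const)
      exact sub_ne_zero.2 hne
    have hM0 : M z₁ = 0 := by rw [hMdef]; simp
    have hM1 : Tendsto (fun z => ‖M z‖) (𝓝[K'] z₁) (𝓝 0) := by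
      have h := Filter.Tendsto.norm hMc
      rw [hM0] at h
      simpa using h
    have hrpow : ContinuousAt (fun x : ℝ => x ^ τ) 0 :=
      Real.continuousAt_rpow_const 0 τ (Or.inr (le_of_lt hτpos))
    have hcomp := hrpow.tendsto.comp hM1
    simp only [Function.comp_def] at hcomp
    rwa [Real.zero_rpow (ne_of_gt hτpos)] at hcomp
  have hcont1 : ContinuousWithinAt f K' z₁ := by
    have h1 : Tendsto (fun z => (1 - t z)/(1 + t z)) (𝓝[K'] z₁) (𝓝 1) := by
      have hone : Tendsto (fun _ : ℂ => (1:ℂ)) (𝓝[K'] z₁) (𝓝 1) := tendsto_const_nhds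
      have hnum : Tendsto (fun z => (1:ℂ) - t z) (𝓝[K'] z₁) (𝓝 1) := by
        simpa using hone.sub ht0
      have hden' : Tendsto (fun z => (1:ℂ) + t z) (𝓝[K'] z₁) (𝓝 1) := by
        simpa using hone.add ht0
      have := hnum.div hden' one_ne_zero
      rwa [div_one] at this
    have h2 : Tendsto f (𝓝[K'] z₁) (𝓝 1) := Filter.Tendsto.congr' hfe.symm h1
    unfold ContinuousWithinAt
    rw [hfz₁]
    exact h2
  have htinv : Tendsto (fun z => (t z)⁻¹) (𝓝[K'] z₂) (𝓝 0) := by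
    rw [tendsto_zero_iff_norm_tendsto_zero]
    have hev : (fun z => ‖(t z)⁻¹‖) =ᶠ[𝓝[K'] z₂]
        (fun z => ‖(z - z₂)/(z - z₁)‖ ^ τ) := by
      filter_upwards [eventually_mem_nhdsWithin] with u hu
      rw [norm_inv, htnorm u hu]
      rw [← Real.inv_rpow (norm_nonneg _)]
      congr 1
      rw [← norm_inv]
      congr 1
      rw [hMdef]
      simp only []
      rw [inv_div]
    rw [Filter.tendsto_congr' hev]
    have hNc : ContinuousWithinAt (fun z => (z - z₂)/(z - z₁)) K' z₂ := by
      apply ContinuousWithinAt.div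
        (continuousWithinAt_id.sub continuousWithinAt_const)
        (continuousWithinAt_id.sub continuousWithinAt_const)
      exact sub_ne_zero.2 (Ne.symm hne)
    have hN0 : (fun z : ℂ => (z - z₂)/(z - z₁)) z₂ = 0 := by simp
    have hN1 : Tendsto (fun z => ‖(z - z₂)/(z - z₁)‖) (𝓝[K'] z₂) (𝓝 0) := by
      have h := Filter.Tendsto.norm hNc
      rw [hN0] at h
      simpa using h
    have hrpow : ContinuousAt (fun x : ℝ => x ^ τ) 0 :=
      Real.continuousAt_rpow_const 0 τ (Or.inr (le_of_lt hτpos))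
    have hcomp := hrpow.tendsto.comp hN1
    simp only [Function.comp_def] at hcomp
    rwa [Real.zero_rpow (ne_of_gt hτpos)] at hcomp
  have hcont2 : ContinuousWithinAt f K' z₂ := by
    have hev : (fun u => (1 - t u)/(1 + t u)) =ᶠ[𝓝[K'] z₂]
        (fun u => ((t u)⁻¹ - 1)/((t u)⁻¹ + 1)) := by
      filter_upwards [eventually_mem_nhdsWithin] with u hu
      have h0 := htne u
      have h1 := hden u hu
      have h2 : (t u)⁻¹ + 1 ≠ 0 := by
        intro h
        apply h1
        have := congrArg (fun w => w * t u) h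
        simp only [add_mul, inv_mul_cancel₀ h0, zero_mul] at this
        rw [← this]
        ring
      first
        | (field_simp; ring)
        | field_simp
    have h1 : Tendsto (fun z => ((t z)⁻¹ - 1)/((t z)⁻¹ + 1)) (𝓝[K'] z₂) (𝓝 (-1)) := by
      have hone : Tendsto (fun _ : ℂ => (1:ℂ)) (𝓝[K'] z₂) (𝓝 1) := tendsto_const_nhds
      have hnum : Tendsto (fun z => (t z)⁻¹ - 1) (𝓝[K'] z₂) (𝓝 (-1)) := by
        simpa using htinv.sub hone
      have hden' : Tendsto (fun z => (t z)⁻¹ + 1) (𝓝[K'] z₂) (𝓝 1) := by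
        simpa using htinv.add hone
      have := hnum.div hden' one_ne_zero
      rwa [div_one] at this
    have h2 : Tendsto (fun z => (1 - t z)/(1 + t z)) (𝓝[K'] z₂) (𝓝 (-1)) :=
      Filter.Tendsto.congr' hev.symm h1
    have h3 : Tendsto f (𝓝[K'] z₂) (𝓝 (-1)) := Filter.Tendsto.congr' hfe₂.symm h2
    unfold ContinuousWithinAt
    rw [hfz₂]
    exact h3
  have hcontK : ContinuousOn f K := by
    intro z hz
    by_cases h1 : z = z₁
    · subst h1
      exact (hcont1.union (hpair z (Or.inl rfl))).mono hKsub
    by_cases h2 : z = z₂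
    · subst h2
      exact (hcont2.union (hpair z (Or.inr rfl))).mono hKsub
    · have hzK' : z ∈ K' := (hK'mem z).2 ⟨hz, h1, h2⟩
      have h3 : ContinuousWithinAt f K' z :=
        ((hratio z hzK').congr hfK' (hfK' z hzK'))
      have h4 : ContinuousWithinAt f {z₁, z₂} z := by
        apply continuousWithinAt_of_notMem_closure
        have hcl : IsClosed ({z₁, z₂} : Set ℂ) :=
          ((Set.finite_singleton z₂).insert z₁).isClosed
        rw [hcl.closure_eq]
        simp [h1, h2]
      exact (h3.union h4).mono hKsub
  -- differentiability
  have hdiff : DifferentiableOn ℂ f (interior K) := by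
    have htd : DifferentiableOn ℂ t (interior K) := by
      intro z hz
      exact ((hgd z hz).const_mul _).cexp
    have h1 : DifferentiableOn ℂ (fun z => (1 - t z)/(1 + t z)) (interior K) := by
      exact DifferentiableOn.div ((differentiableOn_const _).sub htd)
        ((differentiableOn_const _).add htd)
        (fun z hz => hden z (hintK' hz))
    exact h1.congr (fun z hz => hfK' z (hintK' hz))
  refine ⟨f, hcontK, hdiff, hsup, hinj, hfz₁, hfz₂, ?_⟩
  rintro w ⟨u, hu, rfl⟩
  rw [Metric.mem_ball, dist_zero_right]
  exact habslt u hu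
end
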